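/- arXiv:1302.4599 — 9 statements merged into one kernel-verified Lean document; each statement's English description precedes it below -/
import Mathlib

section
/- Let E ⊆ [0,∞), let γ̃ = (γ_n) ∈ Ẽ₀ᵈ, let ((a_n,b_n)) ∈ Ĩ_Eᵈ and let ã = (a_n). Then γ̃ ≍ ã holds if and only if limsup_n a_n/γ_n < ∞ and γ_n ≤ a_n for all sufficiently large n. -/
open Filter Topology Set
open scoped ENNReal

/-- A scaling sequence: strictly positive reals tending to zero. -/
def IsScaling (r : ℕ → ℝ) : Prop := (∀ n, 0 < r n) ∧ Tendsto r atTop (𝓝 0)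

/-- A sequence of reals is almost decreasing if it is eventually nonincreasing. -/
def AlmostDecreasing (t : ℕ → ℝ) : Prop := ∀ᶠ n in atTop, t (n + 1) ≤ t n

/-- `τ ∈ Ẽ₀ᵈ`: almost decreasing, values in `E \ {0}`, tending to `0`. -/
def MemE0d (E : Set ℝ) (t : ℕ → ℝ) : Prop :=
  AlmostDecreasing t ∧ (∀ n, t n ∈ E \ {0}) ∧ Tendsto t atTop (𝓝 0)

/-- `(a,b)` is a connected component of `Int(ℝ⁺ \ E)`: an open interval in `ℝ⁺`
missing `E` that is maximal (among such intervals) with this property. -/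
def IsGapComponent (E : Set ℝ) (a b : ℝ) : Prop :=
  0 ≤ a ∧ a < b ∧ Ioo a b ∩ E = ∅ ∧
    ∀ a' b' : ℝ, 0 ≤ a' → a' ≤ a → b ≤ b' → Ioo a' b' ∩ E = ∅ → a' = a ∧ b' = b

/-- `((aₙ,bₙ))ₙ ∈ Ĩ_Eᵈ`. -/
def MemIE (E : Set ℝ) (a b : ℕ → ℝ) : Prop :=
  (∀ n, IsGapComponent E (a n) (b n)) ∧ AlmostDecreasing a ∧
    Tendsto a atTop (𝓝 0) ∧ Tendsto (fun n => (b n - a n) / b n) atTop (𝓝 1)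

/-- `x̃ ≍ ỹ`: there are `c₁, c₂ > 0` with `c₁ xₙ < yₙ < c₂ xₙ` for all `n`. -/
def Asymp (x y : ℕ → ℝ) : Prop :=
  ∃ c₁ c₂ : ℝ, 0 < c₁ ∧ 0 < c₂ ∧ ∀ n, c₁ * x n < y n ∧ y n < c₂ * x n

/-- `E` is `τ̃`-strongly porous at `0`. -/
def TauStronglyPorous (E : Set ℝ) (t : ℕ → ℝ) : Prop :=
  ∃ a b : ℕ → ℝ, MemIE E a b ∧ Asymp t a

/-- `E` is completely strongly porous at `0`. -/
def CSP (E : Set ℝ) : Prop := ∀ t : ℕ → ℝ, MemE0d E t → TauStronglyPorous E t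

/-- `L̃ = ((lₙ,mₙ)) ∈ Ĩ_Eᵈ` is universal. -/
def IsUniversal (E : Set ℝ) (l m : ℕ → ℝ) : Prop :=
  MemIE E l m ∧ ∀ a b : ℕ → ℝ, MemIE E a b →
    ∃ (N₁ : ℕ) (f : ℕ → ℕ), ∀ n, N₁ ≤ n → a n = l (f n)

/-- `M(L̃) = limsupₙ lₙ/mₙ₊₁`, as an element of `[0,∞]`. -/
noncomputable def Mlim (l m : ℕ → ℝ) : ℝ≥0∞ :=
  limsup (fun n => ENNReal.ofReal (l n / m (n + 1))) atTop

/-- `C(τ̃) = inf{ limsupₙ aₙ/τₙ : ((aₙ,bₙ)) ∈ Ĩ_Eᵈ(τ̃) }` (inf ∅ = ∞). -/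
noncomputable def Ctau (E : Set ℝ) (t : ℕ → ℝ) : ℝ≥0∞ :=
  sInf {c : ℝ≥0∞ | ∃ a b : ℕ → ℝ, MemIE E a b ∧ (∀ᶠ n in atTop, t n ≤ a n) ∧
    c = limsup (fun n => ENNReal.ofReal (a n / t n)) atTop}

/-- `C_E = sup_{τ̃ ∈ Ẽ₀ᵈ} C(τ̃)`. -/
noncomputable def Ctot (E : Set ℝ) : ℝ≥0∞ :=
  ⨆ t ∈ {t : ℕ → ℝ | MemE0d E t}, Ctau E t

/-- A normal scaling sequence for the pointed metric space `(E, |·|, 0)`. -/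
def IsNormalE (E : Set ℝ) (r : ℕ → ℝ) : Prop :=
  IsScaling r ∧ ∃ s : ℕ → ℝ, (∀ n, s n ∈ E) ∧ AlmostDecreasing s ∧
    Tendsto (fun n => s n / r n) atTop (𝓝 1)

/-- `R*(Ω₀ᴱ(n))`: the sup of all limits `limₙ sₙ/rₙ` over normal scaling sequences `r`
for `(E,|·|,0)` and sequences `s` in `E` for which the finite limit exists (sup ∅ = 0). -/
noncomputable def RstarE (E : Set ℝ) : ℝ≥0∞ :=
  sSup {c : ℝ≥0∞ | ∃ (r s : ℕ → ℝ) (L : ℝ), IsNormalE E r ∧ (∀ n, s n ∈ E) ∧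
    Tendsto (fun n => s n / r n) atTop (𝓝 L) ∧ c = ENNReal.ofReal L}

/-- `x̃` and `ỹ` are mutually stable w.r.t. `r̃`. -/
def MutuallyStable {X : Type*} [MetricSpace X] (r : ℕ → ℝ) (x y : ℕ → X) : Prop :=
  ∃ L : ℝ, Tendsto (fun n => dist (x n) (y n) / r n) atTop (𝓝 L)

/-- A family of sequences is self-stable w.r.t. `r̃`. -/
def SelfStable {X : Type*} [MetricSpace X] (r : ℕ → ℝ) (F : Set (ℕ → X)) : Prop :=
  ∀ x ∈ F, ∀ y ∈ F, MutuallyStable r x y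

/-- A maximal self-stable family w.r.t. `r̃`. -/
def MaximalSelfStable {X : Type*} [MetricSpace X] (r : ℕ → ℝ) (F : Set (ℕ → X)) : Prop :=
  SelfStable r F ∧ ∀ z : ℕ → X, z ∈ F ∨ ∃ x ∈ F, ¬ MutuallyStable r x z

/-- A normal scaling sequence for the pointed metric space `(X,d,p)`. -/
def IsNormalX {X : Type*} [MetricSpace X] (p : X) (r : ℕ → ℝ) : Prop :=
  IsScaling r ∧ ∃ x : ℕ → X, AlmostDecreasing (fun n => dist (x n) p) ∧
    Tendsto (fun n => dist (x n) p / r n) atTop (𝓝 1)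

/-- `R*(Ω_pˣ(n))`: the sup of all limits `limₙ d(xₙ,p)/rₙ` over normal scaling
sequences `r̃` and sequences `x̃` in `X` for which the finite limit exists (sup ∅ = 0). -/
noncomputable def RstarX {X : Type*} [MetricSpace X] (p : X) : ℝ≥0∞ :=
  sSup {c : ℝ≥0∞ | ∃ (r : ℕ → ℝ) (x : ℕ → X) (L : ℝ), IsNormalX p r ∧
    Tendsto (fun n => dist (x n) p / r n) atTop (𝓝 L) ∧ c = ENNReal.ofReal L}

/-- `R₊(Ω_pˣ(n))`: the inf of the strictly positive such limits (inf ∅ = ∞). -/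
noncomputable def RlowX {X : Type*} [MetricSpace X] (p : X) : ℝ≥0∞ :=
  sInf {c : ℝ≥0∞ | ∃ (r : ℕ → ℝ) (x : ℕ → X) (L : ℝ), IsNormalX p r ∧
    Tendsto (fun n => dist (x n) p / r n) atTop (𝓝 L) ∧ 0 < L ∧ c = ENNReal.ofReal L}

/-- Lemma 2.3. -/
theorem stmt1 (E : Set ℝ) (hE : E ⊆ Ici 0) (γ : ℕ → ℝ) (hγ : MemE0d E γ)
    (a b : ℕ → ℝ) (hab : MemIE E a b) :
    Asymp γ a ↔
      ((∃ C : ℝ, ∀ᶠ n in atTop, a n / γ n ≤ C) ∧ ∀ᶠ n in atTop, γ n ≤ a n) := by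
  obtain ⟨-, hγE, hγ0⟩ := hγ
  obtain ⟨hgap, -, -, hba⟩ := hab
  have hγpos : ∀ n, 0 < γ n := fun n =>
    lt_of_le_of_ne (hE (hγE n).1) (Ne.symm (hγE n).2)
  have hbpos : ∀ n, 0 < b n := fun n => lt_of_le_of_lt (hgap n).1 (hgap n).2.1
  have hapos : ∀ n, 0 < a n := by
    intro n
    rcases lt_or_eq_of_le (hgap n).1 with h | h
    · exact h
    · exfalso
      obtain ⟨k, hk⟩ := (hγ0.eventually (gt_mem_nhds (hbpos n))).exists
      have hmem : γ k ∈ Ioo (a n) (b n) ∩ E := ⟨⟨h ▸ hγpos k, hk⟩, (hγE k).1⟩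
      rw [(hgap n).2.2.1] at hmem
      exact hmem
  have hab0 : Tendsto (fun n => a n / b n) atTop (𝓝 0) := by
    have h := (tendsto_const_nhds (x := (1:ℝ)) (f := atTop)).sub hba
    rw [sub_self] at h
    refine h.congr fun n => ?_
    have hb : b n ≠ 0 := (hbpos n).ne'
    field_simp
    ring
  constructor
  · rintro ⟨c₁, c₂, hc₁, hc₂, h⟩
    constructor
    · exact ⟨c₂, Eventually.of_forall fun n =>
        le_of_lt ((div_lt_iff₀ (hγpos n)).mpr (h n).2)⟩
    · filter_upwards [hab0.eventually (gt_mem_nhds hc₁)] with n hn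
      by_contra hlt
      push_neg at hlt
      have h1 : a n < c₁ * b n := (div_lt_iff₀ (hbpos n)).mp hn
      have h2 : c₁ * γ n < c₁ * b n := lt_trans (h n).1 h1
      have hγb : γ n < b n := lt_of_mul_lt_mul_left h2 hc₁.le
      have hmem : γ n ∈ Ioo (a n) (b n) ∩ E := ⟨⟨hlt, hγb⟩, (hγE n).1⟩
      rw [(hgap n).2.2.1] at hmem
      exact hmem
  · rintro ⟨⟨C, hC⟩, hle⟩
    obtain ⟨N, hN⟩ := eventually_atTop.mp (hC.and hle)
    set S := ∑ k ∈ Finset.range N, γ k / a k with hSdef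
    set T := ∑ k ∈ Finset.range N, a k / γ k with hTdef
    have hS0 : 0 ≤ S :=
      Finset.sum_nonneg fun k _ => div_nonneg (hγpos k).le (hapos k).le
    have hT0 : 0 ≤ T :=
      Finset.sum_nonneg fun k _ => div_nonneg (hapos k).le (hγpos k).le
    refine ⟨1 / (2 * (1 + S)), |C| + 1 + T, by positivity, by positivity,
      fun n => ⟨?_, ?_⟩⟩
    · have hden : (0:ℝ) < 2 * (1 + S) := by positivity
      rw [div_mul_eq_mul_div, div_lt_iff₀ hden, one_mul]
      rcases lt_or_ge n N with h | h
      · have h1 : γ n / a n ≤ S :=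
          Finset.single_le_sum (f := fun k => γ k / a k)
            (fun k _ => div_nonneg (hγpos k).le (hapos k).le)
            (Finset.mem_range.mpr h)
        have h2 : γ n ≤ S * a n := (div_le_iff₀ (hapos n)).mp h1
        nlinarith [hapos n, hS0]
      · have h2 := (hN n h).2
        nlinarith [hγpos n, hapos n, hS0]
    · rcases lt_or_ge n N with h | h
      · have h1 : a n / γ n ≤ T :=
          Finset.single_le_sum (f := fun k => a k / γ k)
            (fun k _ => div_nonneg (hapos k).le (hγpos k).le)
            (Finset.mem_range.mpr h)
        have h2 : a n ≤ T * γ n := (div_le_iff₀ (hγpos n)).mp h1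
        nlinarith [hγpos n, abs_nonneg C]
      · have h1 : a n ≤ C * γ n := (div_le_iff₀ (hγpos n)).mp (hN n h).1
        nlinarith [hγpos n, hT0, le_abs_self C]
end

section
/- Let (x_n) be a strictly decreasing sequence of positive real numbers with lim_n x_{n+1}/x_n = 0, and let W = {x_n : n ∈ ℕ}. Then W is completely strongly porous at 0, the sequence of intervals L̃ = ((x_{n+1}, x_n))_{n∈ℕ} belongs to Ĩ_Wᵈ and is universal, and M(L̃) = 1. -/
open Filter Topology Set
open scoped ENNReal

private lemma xlim0 (x : ℕ → ℝ) (hpos : ∀ n, 0 < x n) (hanti : StrictAnti x)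
    (hlim : Tendsto (fun n => x (n + 1) / x n) atTop (𝓝 0)) :
    Tendsto x atTop (𝓝 0) := by
  have hbdd : BddBelow (Set.range x) := ⟨0, by rintro _ ⟨n, rfl⟩; exact (hpos n).le⟩
  have h := tendsto_atTop_ciInf hanti.antitone hbdd
  have hL0 : 0 ≤ ⨅ i, x i := le_ciInf fun n => (hpos n).le
  rcases hL0.eq_or_lt with h0 | h0
  · rwa [← h0] at h
  · exfalso
    have hsucc : Tendsto (fun n => x (n + 1)) atTop (𝓝 (⨅ i, x i)) :=
      h.comp (tendsto_add_atTop_nat 1)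
    have h1 : Tendsto (fun n => x (n + 1) / x n) atTop (𝓝 ((⨅ i, x i) / (⨅ i, x i))) :=
      hsucc.div h h0.ne'
    have h2 := tendsto_nhds_unique h1 hlim
    rw [div_self h0.ne'] at h2
    norm_num at h2

private lemma gap_fwd (x : ℕ → ℝ) (hpos : ∀ n, 0 < x n) (hanti : StrictAnti x) (k : ℕ) :
    IsGapComponent (Set.range x) (x (k + 1)) (x k) := by
  refine ⟨(hpos _).le, hanti (Nat.lt_succ_self k), ?_, ?_⟩
  · ext y
    simp only [Set.mem_inter_iff, Set.mem_Ioo, Set.mem_range, Set.mem_empty_iff_false,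
      iff_false, not_and, not_exists]
    rintro ⟨h1, h2⟩ j rfl
    have hj1 : j < k + 1 := hanti.lt_iff_gt.mp h1
    have hj2 : k < j := hanti.lt_iff_gt.mp h2
    omega
  · intro a' b' _ ha' hb' hempty
    constructor
    · by_contra hne
      have hlt : a' < x (k + 1) := lt_of_le_of_ne ha' hne
      have hmem : x (k + 1) ∈ Ioo a' b' ∩ Set.range x :=
        ⟨⟨hlt, lt_of_lt_of_le (hanti k.lt_succ_self) hb'⟩, k + 1, rfl⟩
      rw [hempty] at hmem; exact hmem
    · by_contra hne
      have hlt : x k < b' := lt_of_le_of_ne hb' (Ne.symm hne)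
      have hmem : x k ∈ Ioo a' b' ∩ Set.range x :=
        ⟨⟨lt_of_le_of_lt ha' (hanti k.lt_succ_self), hlt⟩, k, rfl⟩
      rw [hempty] at hmem; exact hmem

private lemma gap_classify (x : ℕ → ℝ) (hpos : ∀ n, 0 < x n) (hanti : StrictAnti x)
    (hlim0 : Tendsto x atTop (𝓝 0)) {a b : ℝ}
    (h : IsGapComponent (Set.range x) a b) : ∃ k, a = x (k + 1) ∧ b = x k := by
  classical
  obtain ⟨ha0, hab, hempty, hmax⟩ := h
  have hb0 : 0 < b := lt_of_le_of_lt ha0 hab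
  have hex : ∃ m, x m < b := (hlim0.eventually (gt_mem_nhds hb0)).exists
  have hxm : x (Nat.find hex) < b := Nat.find_spec hex
  have hxma : x (Nat.find hex) ≤ a := by
    by_contra hlt
    push_neg at hlt
    have hmem : x (Nat.find hex) ∈ Ioo a b ∩ Set.range x := ⟨⟨hlt, hxm⟩, Nat.find hex, rfl⟩
    rw [hempty] at hmem; exact hmem
  have hm1 : 1 ≤ Nat.find hex := by
    rcases Nat.eq_zero_or_pos (Nat.find hex) with h0 | h1
    · exfalso
      have hx0a : x 0 ≤ a := h0 ▸ hxma
      have hemp : Ioo a (b + 1) ∩ Set.range x = ∅ := by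
        ext y
        simp only [Set.mem_inter_iff, Set.mem_Ioo, Set.mem_range, Set.mem_empty_iff_false,
          iff_false, not_and, not_exists]
        rintro ⟨h1, h2⟩ j rfl
        exact absurd h1 (not_lt.mpr (le_trans (hanti.antitone (Nat.zero_le j)) hx0a))
      have := (hmax a (b + 1) ha0 le_rfl (by linarith) hemp).2
      linarith
    · exact h1
  obtain ⟨k, hk⟩ : ∃ k, Nat.find hex = k + 1 := ⟨Nat.find hex - 1, by omega⟩
  have hbk : b ≤ x k := by
    have hmin := Nat.find_min hex (m := k) (by omega)
    exact not_lt.mp hmin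
  have hemp : Ioo (x (k + 1)) (x k) ∩ Set.range x = ∅ := by
    ext y
    simp only [Set.mem_inter_iff, Set.mem_Ioo, Set.mem_range, Set.mem_empty_iff_false,
      iff_false, not_and, not_exists]
    rintro ⟨h1, h2⟩ j rfl
    have hj1 : j < k + 1 := hanti.lt_iff_gt.mp h1
    have hj2 : k < j := hanti.lt_iff_gt.mp h2
    omega
  have hres := hmax (x (k + 1)) (x k) (hpos _).le (hk ▸ hxma) hbk hemp
  exact ⟨k, hres.1.symm, hres.2.symm⟩

private lemma memIE_L (x : ℕ → ℝ) (hpos : ∀ n, 0 < x n) (hanti : StrictAnti x)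
    (hlim : Tendsto (fun n => x (n + 1) / x n) atTop (𝓝 0)) :
    MemIE (Set.range x) (fun n => x (n + 1)) x := by
  refine ⟨fun n => gap_fwd x hpos hanti n, ?_, ?_, ?_⟩
  · exact Eventually.of_forall fun n => (hanti (by omega : n + 1 < n + 2)).le
  · exact (xlim0 x hpos hanti hlim).comp (tendsto_add_atTop_nat 1)
  · have h := Filter.Tendsto.sub
      (tendsto_const_nhds : Tendsto (fun _ : ℕ => (1 : ℝ)) atTop (𝓝 1)) hlim
    rw [sub_zero] at h
    refine h.congr fun n => ?_
    rw [sub_div, div_self (hpos n).ne']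

/-- Example 2 (Example 4.4.7). -/
theorem stmt2 (x : ℕ → ℝ) (hpos : ∀ n, 0 < x n) (hanti : StrictAnti x)
    (hlim : Tendsto (fun n => x (n + 1) / x n) atTop (𝓝 0)) :
    CSP (Set.range x) ∧
      MemIE (Set.range x) (fun n => x (n + 1)) x ∧
      IsUniversal (Set.range x) (fun n => x (n + 1)) x ∧
      Mlim (fun n => x (n + 1)) x = 1 := by
  have hlim0 := xlim0 x hpos hanti hlim
  have hIE := memIE_L x hpos hanti hlim
  have huniv : IsUniversal (Set.range x) (fun n => x (n + 1)) x := by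
    refine ⟨hIE, ?_⟩
    intro a b hab
    choose f hf _ using fun n => gap_classify x hpos hanti hlim0 (hab.1 n)
    exact ⟨0, f, fun n _ => hf n⟩
  have hcsp : CSP (Set.range x) := by
    intro t ht
    obtain ⟨htad, htmem, htlim⟩ := ht
    choose g hg using fun n => (htmem n).1
    have htpos : ∀ n, 0 < t n := fun n => (hg n) ▸ hpos (g n)
    set k : ℕ → ℕ := fun n => max (g n) 1 - 1 with hkdef
    have hk1 : ∀ n, k n + 1 = max (g n) 1 := fun n => by simp only [hkdef]; omega
    -- eventually a n = t n
    have hev : ∀ᶠ n in atTop, x (k n + 1) = t n := by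
      filter_upwards [htlim.eventually (gt_mem_nhds (hpos 0))] with n hn
      have hgn : 1 ≤ g n := by
        rcases Nat.eq_zero_or_pos (g n) with h0 | h1
        · exfalso; rw [← hg n, h0] at hn; exact lt_irrefl _ hn
        · exact h1
      rw [hk1 n, max_eq_left hgn, hg n]
    have halim : Tendsto (fun n => x (k n + 1)) atTop (𝓝 0) :=
      Tendsto.congr' (hev.mono fun _ h => h.symm) htlim
    have hktop : Tendsto k atTop atTop := by
      rw [tendsto_atTop]
      intro K
      filter_upwards [halim.eventually (gt_mem_nhds (hpos (K + 1)))] with n hn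
      have : K + 1 < k n + 1 := hanti.lt_iff_gt.mp hn
      omega
    refine ⟨fun n => x (k n + 1), fun n => x (k n),
      ⟨fun n => gap_fwd x hpos hanti (k n), ?_, halim, ?_⟩, ?_⟩
    · -- almost decreasing
      filter_upwards [hev, (tendsto_add_atTop_nat 1).eventually hev, htad] with n h1 h2 h3
      rw [h1, h2]; exact h3
    · -- ratio tends to 1
      have h := Filter.Tendsto.sub
        (tendsto_const_nhds : Tendsto (fun _ : ℕ => (1 : ℝ)) atTop (𝓝 1)) (hlim.comp hktop)
      rw [sub_zero] at h
      refine h.congr fun n => ?_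
      simp only [Function.comp_apply]
      rw [sub_div, div_self (hpos (k n)).ne']
    · -- Asymp
      refine ⟨x 1 / (2 * x 0), 2, by
        have h0 := hpos 0; have h1 := hpos 1; positivity, by norm_num, fun n => ?_⟩
      dsimp only
      have hx10 : x 1 < x 0 := hanti Nat.zero_lt_one
      have hx0 := hpos 0
      have hx1 := hpos 1
      rcases Nat.eq_zero_or_pos (g n) with h0 | h1
      · have ht0 : t n = x 0 := by rw [← hg n, h0]
        have hk0 : k n + 1 = 1 := by rw [hk1 n, h0]; omega
        rw [ht0, hk0]
        constructor
        · rw [div_mul_eq_mul_div, div_lt_iff₀ (by linarith)]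
          nlinarith
        · linarith
      · have hat : x (k n + 1) = t n := by rw [hk1 n, max_eq_left h1]; exact hg n
        rw [hat]
        have hc1 : x 1 / (2 * x 0) < 1 := by
          rw [div_lt_one (by linarith)]; linarith
        constructor
        · nlinarith [htpos n]
        · nlinarith [htpos n]
  refine ⟨hcsp, hIE, huniv, ?_⟩
  have : (fun n => ENNReal.ofReal (x (n + 1) / x (n + 1))) = fun _ => (1 : ℝ≥0∞) := by
    funext n
    rw [div_self (hpos (n + 1)).ne', ENNReal.ofReal_one]
  rw [Mlim, this, limsup_const]
end

section
/- Let (X,d,p) be a pointed metric space. The following are equivalent: (i) there is a constant c > 0 such that for every scaling sequence r̃ = (r_n) and every sequence (x_n) in X for which the finite limit lim_n d(x_n,p)/r_n exists, this limit is at most c (i.e., the family of all pretangent spaces to X at p is uniformly bounded); (ii) p is an isolated point of X. -/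
open Filter Topology Set
open scoped ENNReal

/-- the family of all pretangent spaces to `X` at `p` is uniformly
bounded iff `p` is an isolated point of `X`. -/
theorem stmt4 {X : Type*} [MetricSpace X] (p : X) :
    (∃ c : ℝ, 0 < c ∧ ∀ (r : ℕ → ℝ) (x : ℕ → X) (L : ℝ), IsScaling r →
        Tendsto (fun n => dist (x n) p / r n) atTop (𝓝 L) → L ≤ c) ↔
      p ∉ closure ({p}ᶜ : Set X) := by
  constructor
  · rintro ⟨c, hc, h⟩ hp
    -- choose points x n ≠ p with dist < 1/(n+1)
    have hx : ∀ n : ℕ, ∃ x : X, x ≠ p ∧ dist (x : X) p < 1 / (n + 1) := by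
      intro n
      rw [Metric.mem_closure_iff] at hp
      obtain ⟨b, hb, hbd⟩ := hp (1 / (n + 1)) (by positivity)
      exact ⟨b, hb, by rwa [dist_comm]⟩
    choose x hxne hxd using hx
    have hdpos : ∀ n, 0 < dist (x n) p := fun n =>
      dist_pos.2 (hxne n)
    set r : ℕ → ℝ := fun n => dist (x n) p / (2 * c) with hr
    have hrpos : ∀ n, 0 < r n := fun n => by
      have := hdpos n; positivity
    have hd0 : Tendsto (fun n => dist (x n) p) atTop (𝓝 0) := by
      have h1 : Tendsto (fun n : ℕ => 1 / ((n : ℝ) + 1)) atTop (𝓝 0) :=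
        tendsto_one_div_add_atTop_nhds_zero_nat
      refine squeeze_zero (fun n => (hdpos n).le) (fun n => (hxd n).le) h1
    have hr0 : Tendsto r atTop (𝓝 0) := by
      have := hd0.div_const (2 * c)
      simpa using this
    have hratio : ∀ n, dist (x n) p / r n = 2 * c := by
      intro n
      show dist (x n) p / (dist (x n) p / (2 * c)) = 2 * c
      rw [div_div_cancel₀ (hdpos n).ne']
    have := h r x (2 * c) ⟨hrpos, hr0⟩ (by simp only [hratio]; exact tendsto_const_nhds)
    linarith
  · intro hp
    refine ⟨1, one_pos, ?_⟩
    rintro r x L ⟨hrpos, hr0⟩ hL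
    -- there is ε > 0 such that dist y p < ε → y = p
    have : ∃ ε > 0, ∀ y : X, dist y p < ε → y = p := by
      rw [Metric.mem_closure_iff] at hp
      push_neg at hp
      obtain ⟨ε, hε, hcl⟩ := hp
      refine ⟨ε, hε, fun y hy => ?_⟩
      by_contra hne
      exact absurd (by rwa [dist_comm]) (hcl y hne).not_gt
    obtain ⟨ε, hε, hiso⟩ := this
    have hL0 : 0 ≤ L := by
      have := ge_of_tendsto' hL (fun n => div_nonneg dist_nonneg (hrpos n).le)
      exact this
    -- eventually the ratio equals 0
    have hev : ∀ᶠ n in atTop, dist (x n) p / r n = 0 := by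
      have h1 : ∀ᶠ n in atTop, dist (x n) p / r n < L + 1 :=
        hL.eventually (Filter.Tendsto.eventually_lt_const (by linarith) tendsto_id)
      have h2 : ∀ᶠ n in atTop, r n < ε / (L + 1) := by
        have := hr0.eventually (eventually_lt_nhds (show (0:ℝ) < ε / (L + 1) by positivity))
        simpa using this
      filter_upwards [h1, h2] with n hn1 hn2
      have hxp : x n = p := by
        apply hiso
        by_contra hge
        push_neg at hge
        have : ε / r n ≤ dist (x n) p / r n := by
          gcongr
          exact (hrpos n).le
        have hεr : ε / r n < L + 1 := lt_of_le_of_lt this hn1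
        have : ε < (L + 1) * r n := by
          rw [div_lt_iff₀ (hrpos n)] at hεr; linarith
        have : ε / (L + 1) < r n := by
          rw [div_lt_iff₀ (by linarith : (0:ℝ) < L + 1)]; linarith
        linarith
      simp [hxp, dist_self]
    have : Tendsto (fun n => dist (x n) p / r n) atTop (𝓝 0) :=
      Tendsto.congr' (by filter_upwards [hev] with n hn; exact hn.symm) tendsto_const_nhds
    have := tendsto_nhds_unique hL this
    linarith
end

section
/- Let (X,d,p) be a pointed metric space, let r̃ = (r_n) be a scaling sequence and let (x_n) be a sequence in X such that the limit lim_n d(x_n,p)/r_n exists and lies in (0,∞). Then there exist a constant c > 0 and a strictly increasing sequence (n_k) of natural numbers such that the sequence (c·r_{n_k})_{k∈ℕ} is a normal scaling sequence for (X,d,p). -/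
open Filter Topology Set
open scoped ENNReal

/-- Proposition (i₁). -/
theorem stmt5 {X : Type*} [MetricSpace X] (p : X) (r : ℕ → ℝ) (hr : IsScaling r)
    (x : ℕ → X) (L : ℝ) (hL : 0 < L)
    (hx : Tendsto (fun n => dist (x n) p / r n) atTop (𝓝 L)) :
    ∃ (c : ℝ) (nk : ℕ → ℕ), 0 < c ∧ StrictMono nk ∧
      IsNormalX p (fun k => c * r (nk k)) := by
  -- d(x n, p) tends to 0
  have hrne : ∀ n, r n ≠ 0 := fun n => (hr.1 n).ne'
  have hd0 : Tendsto (fun n => dist (x n) p) atTop (𝓝 0) := by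
    have := hx.mul hr.2
    rw [mul_zero] at this
    refine this.congr fun n => ?_
    rw [div_mul_cancel₀ _ (hrne n)]
  -- eventually positive
  have hpos : ∀ᶠ n in atTop, 0 < dist (x n) p := by
    filter_upwards [hx.eventually (lt_mem_nhds (half_lt_self hL))] with n hn
    by_contra h
    push_neg at h
    have : dist (x n) p = 0 := le_antisymm h dist_nonneg
    rw [this, zero_div] at hn
    linarith [half_pos hL]
  obtain ⟨N, hN⟩ := eventually_atTop.1 hpos
  have key : ∀ n, ∃ m, n < m ∧ N ≤ m ∧ (N ≤ n → dist (x m) p ≤ dist (x n) p) := by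
    intro n
    by_cases hn : N ≤ n
    · have : ∀ᶠ m in atTop, dist (x m) p < dist (x n) p :=
        hd0.eventually (gt_mem_nhds (hN n hn))
      obtain ⟨M, hM⟩ := eventually_atTop.1 this
      exact ⟨max (n + 1) M, lt_of_lt_of_le (Nat.lt_succ_self n) (le_max_left _ _),
        le_trans (le_trans hn (Nat.le_succ n)) (le_max_left _ _),
        fun _ => (hM _ (le_max_right _ _)).le⟩
    · exact ⟨max (n + 1) N, lt_of_lt_of_le (Nat.lt_succ_self n) (le_max_left _ _),
        le_max_right _ _, fun h => absurd h hn⟩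
  -- define the subsequence
  let nk : ℕ → ℕ := fun k => Nat.rec N (fun _ prev => (key prev).choose) k
  have hsucc : ∀ k, nk (k + 1) = (key (nk k)).choose := fun k => rfl
  have hmono : StrictMono nk := by
    apply strictMono_nat_of_lt_succ
    intro k
    rw [hsucc]
    exact (key (nk k)).choose_spec.1
  have hge : ∀ k, N ≤ nk k := by
    intro k
    induction k with
    | zero => exact le_refl N
    | succ k ih => rw [hsucc]; exact (key (nk k)).choose_spec.2.1
  have hdec : ∀ k, dist (x (nk (k + 1))) p ≤ dist (x (nk k)) p := by
    intro k
    rw [hsucc]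
    exact (key (nk k)).choose_spec.2.2 (hge k)
  have htk : Tendsto nk atTop atTop := hmono.tendsto_atTop
  refine ⟨L, nk, hL, hmono, ⟨⟨fun k => mul_pos hL (hr.1 (nk k)), ?_⟩,
    fun k => x (nk k), Eventually.of_forall hdec, ?_⟩⟩
  · have : Tendsto (fun k => r (nk k)) atTop (𝓝 0) := hr.2.comp htk
    have := this.const_mul L
    rwa [mul_zero] at this
  · have h1 : Tendsto (fun k => dist (x (nk k)) p / r (nk k)) atTop (𝓝 L) := hx.comp htk
    have h2 := h1.const_mul L⁻¹
    rw [inv_mul_cancel₀ hL.ne'] at h2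
    refine h2.congr fun k => ?_
    simp only []
    field_simp
end

section
/- Let (X,d,p) be a pointed metric space and let r̃ = (r_n) be an almost decreasing scaling sequence. If there is a sequence (y_n) in X with d(y_n,p) > 0 for every n and lim_n d(y_n,p)/r_n = 1, then there is a sequence (x_n) in X such that (d(x_n,p)) is almost decreasing and lim_n d(x_n,p)/r_n = 1; in particular r̃ is a normal scaling sequence for (X,d,p). -/
open Filter Topology Set
open scoped ENNReal

/-- Proposition (i₃). -/
theorem stmt6 {X : Type*} [MetricSpace X] (p : X) (r : ℕ → ℝ) (hr : IsScaling r)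
    (hrd : AlmostDecreasing r) (y : ℕ → X) (hy : ∀ n, 0 < dist (y n) p)
    (hlim : Tendsto (fun n => dist (y n) p / r n) atTop (𝓝 1)) :
    (∃ x : ℕ → X, AlmostDecreasing (fun n => dist (x n) p) ∧
        Tendsto (fun n => dist (x n) p / r n) atTop (𝓝 1)) ∧
      IsNormalX p r := by
  obtain ⟨hrpos, hr0⟩ := hr
  obtain ⟨N0, hN0⟩ := eventually_atTop.1 hrd
  have hrmono : ∀ m k, N0 ≤ m → m ≤ k → r k ≤ r m := by
    intro m k hm hmk
    induction k, hmk using Nat.le_induction with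
    | base => exact le_rfl
    | succ k hk ih => exact le_trans (hN0 k (le_trans hm hk)) ih
  have hd0 : Tendsto (fun n => dist (y n) p) atTop (𝓝 0) := by
    have heq : (fun n => dist (y n) p) = fun n => (dist (y n) p / r n) * r n := by
      funext n; exact (div_mul_cancel₀ _ (hrpos n).ne').symm
    rw [heq]
    simpa using hlim.mul hr0
  have hex : ∀ n, ∃ k, n ≤ k ∧ ∀ j, n ≤ j → dist (y j) p ≤ dist (y k) p := by
    intro n
    obtain ⟨M, hM⟩ := eventually_atTop.1 (hd0.eventually_lt_const (hy n))
    set M' := max n M with hM'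
    obtain ⟨k, hkmem, hkmax⟩ := Finset.exists_max_image (Finset.Icc n M')
      (fun j => dist (y j) p) ⟨n, Finset.mem_Icc.2 ⟨le_rfl, le_max_left _ _⟩⟩
    refine ⟨k, (Finset.mem_Icc.1 hkmem).1, fun j hj => ?_⟩
    by_cases hjM : j ≤ M'
    · exact hkmax j (Finset.mem_Icc.2 ⟨hj, hjM⟩)
    · have : dist (y j) p < dist (y n) p :=
        hM j (le_trans (le_max_right n M) (le_of_not_ge hjM))
      exact le_trans this.le
        (hkmax n (Finset.mem_Icc.2 ⟨le_rfl, le_max_left _ _⟩))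
  set K : ℕ → ℕ := fun n => (hex n).choose with hK
  have hKge : ∀ n, n ≤ K n := fun n => (hex n).choose_spec.1
  have hKmax : ∀ n j, n ≤ j → dist (y j) p ≤ dist (y (K n)) p :=
    fun n => (hex n).choose_spec.2
  have hdec : AlmostDecreasing (fun n => dist (y (K n)) p) := by
    refine Eventually.of_forall fun n => ?_
    exact hKmax n (K (n + 1)) (le_trans (Nat.le_succ n) (hKge (n + 1)))
  have htend : Tendsto (fun n => dist (y (K n)) p / r n) atTop (𝓝 1) := by
    rw [Metric.tendsto_atTop] at hlim ⊢
    intro ε hε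
    obtain ⟨N1, hN1⟩ := hlim ε hε
    refine ⟨max N0 N1, fun n hn => ?_⟩
    have hnN0 : N0 ≤ n := le_trans (le_max_left _ _) hn
    have hnN1 : N1 ≤ n := le_trans (le_max_right _ _) hn
    rw [Real.dist_eq, abs_lt]
    constructor
    · have h1 := hN1 n hnN1
      rw [Real.dist_eq, abs_lt] at h1
      have hle : dist (y n) p ≤ dist (y (K n)) p := hKmax n n le_rfl
      have hdiv : dist (y n) p / r n ≤ dist (y (K n)) p / r n := by gcongr; exact (hrpos n).le
      linarith [h1.1]
    · have h2 := hN1 (K n) (le_trans hnN1 (hKge n))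
      rw [Real.dist_eq, abs_lt] at h2
      have hrk : r (K n) ≤ r n := hrmono n (K n) hnN0 (hKge n)
      have h2' : dist (y (K n)) p / r (K n) < 1 + ε := by linarith [h2.2]
      have h3 : dist (y (K n)) p < (1 + ε) * r (K n) := (div_lt_iff₀ (hrpos (K n))).1 h2'
      have h4 : dist (y (K n)) p < (1 + ε) * r n :=
        lt_of_lt_of_le h3 (by nlinarith)
      have h5 : dist (y (K n)) p / r n < 1 + ε := (div_lt_iff₀ (hrpos n)).2 h4
      linarith
  exact ⟨⟨fun n => y (K n), hdec, htend⟩,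
    ⟨⟨hrpos, hr0⟩, fun n => y (K n), hdec, htend⟩⟩
end

section
/- Let E ⊆ [0,∞) with 0 an accumulation point of E. If R*(Ω_0^E(n)) < ∞, i.e., there is a constant c such that lim_n s_n/r_n ≤ c for every normal scaling sequence r̃ = (r_n) for (E,|·|,0) and every sequence (s_n) in E for which this finite limit exists, then E is completely strongly porous at 0. -/
open Filter Topology Set
open scoped ENNReal

private lemma ad_antitone {t : ℕ → ℝ} {N : ℕ} (h : ∀ n, N ≤ n → t (n+1) ≤ t n) :
    ∀ i j, N ≤ i → i ≤ j → t j ≤ t i := by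
  intro i j hNi hij
  induction j with
  | zero =>
    have : i = 0 := Nat.le_zero.mp hij
    simp [this]
  | succ j ih =>
    rcases Nat.lt_or_ge i (j+1) with hlt | hge
    · have hij' : i ≤ j := Nat.lt_succ_iff.mp hlt
      exact le_trans (h j (le_trans hNi hij')) (ih hij')
    · have : i = j + 1 := le_antisymm hij hge
      simp [this]

private lemma asymp_of_threshold (t a : ℕ → ℝ) (ht : ∀ n, 0 < t n) (ha : ∀ n, 0 < a n) :
    ∀ (N : ℕ) (c₁ c₂ : ℝ), 0 < c₁ → 0 < c₂ →
      (∀ n, N ≤ n → c₁ * t n < a n ∧ a n < c₂ * t n) → Asymp t a := by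
  intro N
  induction N with
  | zero =>
    intro c₁ c₂ h1 h2 h
    exact ⟨c₁, c₂, h1, h2, fun n => h n (Nat.zero_le n)⟩
  | succ N ih =>
    intro c₁ c₂ h1 h2 h
    have htN := ht N
    have haN := ha N
    refine ih (min c₁ (a N / (2 * t N))) (max c₂ (2 * a N / t N))
      (lt_min h1 (div_pos haN (by linarith))) (lt_of_lt_of_le h2 (le_max_left _ _)) ?_
    intro n hn
    rcases eq_or_lt_of_le hn with rfl | hlt
    · constructor
      · have e1 : a N / (2 * t N) * t N = a N / 2 := by field_simp
        have : min c₁ (a N / (2 * t N)) * t N ≤ a N / (2 * t N) * t N :=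
          mul_le_mul_of_nonneg_right (min_le_right _ _) htN.le
        rw [e1] at this
        linarith
      · have e2 : 2 * a N / t N * t N = 2 * a N := by field_simp
        have : 2 * a N / t N * t N ≤ max c₂ (2 * a N / t N) * t N :=
          mul_le_mul_of_nonneg_right (le_max_right _ _) htN.le
        rw [e2] at this
        linarith
    · have hh := h n hlt
      constructor
      · exact lt_of_le_of_lt (mul_le_mul_of_nonneg_right (min_le_left _ _) (ht n).le) hh.1
      · exact lt_of_lt_of_le hh.2 (mul_le_mul_of_nonneg_right (le_max_left _ _) (ht n).le)

private lemma factR (E : Set ℝ) (u s : ℕ → ℝ) (hu : ∀ n, u n ∈ E) (hupos : ∀ n, 0 < u n)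
    (huad : AlmostDecreasing u) (hu0 : Tendsto u atTop (𝓝 0))
    (hs : ∀ n, s n ∈ E) {L : ℝ} (hL : Tendsto (fun n => s n / u n) atTop (𝓝 L)) :
    ENNReal.ofReal L ≤ RstarE E := by
  apply le_sSup
  refine ⟨u, s, L, ⟨⟨hupos, hu0⟩, u, hu, huad, ?_⟩, hs, hL, rfl⟩
  have hone : (fun n => u n / u n) = fun _ => (1:ℝ) := funext fun n => div_self (hupos n).ne'
  rw [hone]
  exact tendsto_const_nhds

private lemma claimB (E : Set ℝ) (hb : RstarE E < ⊤) (t : ℕ → ℝ) (htmem : ∀ n, t n ∈ E)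
    (tpos : ∀ n, 0 < t n) (htad : AlmostDecreasing t) (ht0 : Tendsto t atTop (𝓝 0)) (m : ℝ) :
    ∀ᶠ n in atTop, ∀ e ∈ E, e ∉ Icc (((RstarE E).toReal + 1) * t n) (m * t n) := by
  set K := (RstarE E).toReal with hK
  by_contra hcon
  rw [Filter.not_eventually] at hcon
  have hcon' : ∃ᶠ n in atTop, ∃ e, e ∈ E ∧ e ∈ Icc ((K+1) * t n) (m * t n) := by
    apply hcon.mono
    intro n hn
    push_neg at hn
    obtain ⟨e, he1, he2⟩ := hn
    exact ⟨e, he1, he2⟩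
  obtain ⟨φ, hφ, hP⟩ := Filter.extraction_of_frequently_atTop hcon'
  choose e heE heI using hP
  have hqmem : ∀ k, e k / t (φ k) ∈ Icc (K+1) m := by
    intro k
    have hp := tpos (φ k)
    exact ⟨(le_div_iff₀ hp).mpr (heI k).1, (div_le_iff₀ hp).mpr (heI k).2⟩
  obtain ⟨L, hLmem, ψ, hψ, hLt⟩ := isCompact_Icc.tendsto_subseq hqmem
  obtain ⟨N₀, hN₀⟩ := Filter.eventually_atTop.mp htad
  have hmono : StrictMono (φ ∘ ψ) := hφ.comp hψ
  have had : AlmostDecreasing (fun k => t (φ (ψ k))) := by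
    refine Filter.eventually_atTop.mpr ⟨N₀, fun k hk => ?_⟩
    exact ad_antitone hN₀ (φ (ψ k)) (φ (ψ (k+1)))
      (le_trans hk (hmono.le_apply)) (hmono.monotone (Nat.le_succ k))
  have htend : Tendsto (fun k => t (φ (ψ k))) atTop (𝓝 0) :=
    ht0.comp hmono.tendsto_atTop
  have hratio : Tendsto (fun k => e (ψ k) / t (φ (ψ k))) atTop (𝓝 L) := hLt
  have hle : ENNReal.ofReal L ≤ RstarE E :=
    factR E (fun k => t (φ (ψ k))) (fun k => e (ψ k)) (fun k => htmem _)
      (fun k => tpos _) had htend (fun k => heE _) hratio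
  have hLK : L ≤ K := (ENNReal.ofReal_le_iff_le_toReal hb.ne).mp hle
  have : K + 1 ≤ L := hLmem.1
  linarith


/-- Lemma 4.5. -/
theorem stmt8 (E : Set ℝ) (hE : E ⊆ Ici 0) (hacc : (0 : ℝ) ∈ closure (E \ {0}))
    (hb : RstarE E < ⊤) : CSP E := by
  intro t ht
  obtain ⟨htad, htmem, ht0⟩ := ht
  have hmemE : ∀ n, t n ∈ E := fun n => (htmem n).1
  have htne : ∀ n, t n ≠ 0 := fun n => fun h => (htmem n).2 (by simpa using h)
  have tpos : ∀ n, 0 < t n := fun n => lt_of_le_of_ne (hE (hmemE n)) (Ne.symm (htne n))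
  set K := (RstarE E).toReal with hK
  have hK0 : 0 ≤ K := ENNReal.toReal_nonneg
  -- the left endpoints
  set A : ℕ → ℝ := fun n => sSup (E ∩ Icc (t n) ((K+1) * t n)) with hAdef
  have hSmem : ∀ n, t n ∈ E ∩ Icc (t n) ((K+1) * t n) := by
    intro n
    refine ⟨hmemE n, le_refl _, ?_⟩
    nlinarith [tpos n]
  have hSne : ∀ n, (E ∩ Icc (t n) ((K+1) * t n)).Nonempty := fun n => ⟨t n, hSmem n⟩
  have hSbdd : ∀ n, BddAbove (E ∩ Icc (t n) ((K+1) * t n)) :=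
    fun n => ⟨(K+1) * t n, fun e he => he.2.2⟩
  have hA1 : ∀ n, t n ≤ A n := fun n => le_csSup (hSbdd n) (hSmem n)
  have hA2 : ∀ n, A n ≤ (K+1) * t n := fun n => csSup_le (hSne n) (fun e he => he.2.2)
  have hApos : ∀ n, 0 < A n := fun n => lt_of_lt_of_le (tpos n) (hA1 n)
  have hAE : ∀ n, ∀ e, e ∈ E → A n < e → (K+1) * t n < e := by
    intro n e heE h
    by_contra hle
    push_neg at hle
    have hmem : e ∈ E ∩ Icc (t n) ((K+1) * t n) := ⟨heE, le_trans (hA1 n) h.le, hle⟩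
    exact absurd (le_csSup (hSbdd n) hmem) (not_le.mpr h)
  have keyGap : ∀ m : ℝ, ∀ᶠ n in atTop, ∀ e, e ∈ E → A n < e → m * t n < e := by
    intro m
    filter_upwards [claimB E hb t hmemE tpos htad ht0 m] with n hn e heE hlt
    by_contra hle
    push_neg at hle
    exact hn e heE ⟨(hAE n e heE hlt).le, hle⟩
  -- the right endpoints
  set B : ℕ → ℝ := fun n => sInf (E ∩ Ioi (A n)) with hBdef
  have hNe : ∀ᶠ n in atTop, (K+1) * t n < t 0 := by
    have h1 : Tendsto (fun n => (K+1) * t n) atTop (𝓝 ((K+1) * 0)) := ht0.const_mul _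
    rw [mul_zero] at h1
    exact h1.eventually_lt_const (tpos 0)
  obtain ⟨N, hN⟩ := Filter.eventually_atTop.mp (htad.and (hNe.and (keyGap (K+2))))
  have hTne : ∀ n, N ≤ n → (E ∩ Ioi (A n)).Nonempty :=
    fun n hn => ⟨t 0, hmemE 0, lt_of_le_of_lt (hA2 n) (hN n hn).2.1⟩
  have hTbdd : ∀ n, BddBelow (E ∩ Ioi (A n)) := fun n => ⟨A n, fun e he => he.2.le⟩
  have hB1 : ∀ n, N ≤ n → (K+2) * t n ≤ B n :=
    fun n hn => le_csInf (hTne n hn) (fun e he => ((hN n hn).2.2 e he.1 he.2).le)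
  have hAB : ∀ n, N ≤ n → A n < B n := by
    intro n hn
    have := hB1 n hn
    have := hA2 n
    nlinarith [tpos n]
  have hBle : ∀ n, ∀ e, e ∈ E → A n < e → B n ≤ e :=
    fun n e he hlt => csInf_le (hTbdd n) ⟨he, hlt⟩
  have hBpos : ∀ n, N ≤ n → 0 < B n := by
    intro n hn
    have := hB1 n hn
    nlinarith [tpos n]
  -- gap components
  have hgap : ∀ n, N ≤ n → IsGapComponent E (A n) (B n) := by
    intro n hn
    refine ⟨(hApos n).le, hAB n hn, ?_, ?_⟩
    · rw [Set.eq_empty_iff_forall_notMem]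
      rintro x ⟨⟨h1, h2⟩, hxE⟩
      exact absurd (hBle n x hxE h1) (not_le.mpr h2)
    · intro a' b' ha'0 ha' hb' hemp
      have hemp' := Set.eq_empty_iff_forall_notMem.mp hemp
      constructor
      · by_contra hne
        have hlt : a' < A n := lt_of_le_of_ne ha' hne
        obtain ⟨x, hxS, hx⟩ := exists_lt_of_lt_csSup (hSne n) hlt
        exact hemp' x ⟨⟨hx, lt_of_le_of_lt (le_csSup (hSbdd n) hxS)
          (lt_of_lt_of_le (hAB n hn) hb')⟩, hxS.1⟩
      · by_contra hne
        have hlt : B n < b' := lt_of_le_of_ne hb' (Ne.symm hne)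
        obtain ⟨x, hxS, hx⟩ := exists_lt_of_csInf_lt (hTne n hn) hlt
        exact hemp' x ⟨⟨lt_of_le_of_lt ha' hxS.2, hx⟩, hxS.1⟩
  -- A is eventually monotone
  have hmonoA : ∀ n, N ≤ n → A (n+1) ≤ A n := by
    intro n hn
    apply csSup_le (hSne (n+1))
    intro x hx
    by_contra hgt
    push_neg at hgt
    have h1 : (K+2) * t n < x := (hN n hn).2.2 x hx.1 hgt
    have h2 : x ≤ (K+1) * t (n+1) := hx.2.2
    have h3 : t (n+1) ≤ t n := (hN n hn).1
    nlinarith [tpos n]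
  refine ⟨fun n => A (max n N), fun n => B (max n N), ⟨fun n => hgap _ (le_max_right n N),
    ?_, ?_, ?_⟩, ?_⟩
  · -- almost decreasing
    refine Filter.eventually_atTop.mpr ⟨N, fun n hn => ?_⟩
    simp only
    rw [max_eq_left (le_trans hn (Nat.le_succ n)), max_eq_left hn]
    exact hmonoA n hn
  · -- tendsto 0
    have hgt : Tendsto (fun n => t (max n N)) atTop (𝓝 0) :=
      ht0.comp (tendsto_atTop_mono (fun n => le_max_left n N) tendsto_id)
    have h2 : Tendsto (fun n => (K+1) * t (max n N)) atTop (𝓝 0) := by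
      simpa using hgt.const_mul (K+1)
    exact squeeze_zero (fun n => (hApos _).le) (fun n => hA2 _) h2
  · -- relative gap length tends to 1
    have hdiv : Tendsto (fun n => A (max n N) / B (max n N)) atTop (𝓝 0) := by
      rw [Metric.tendsto_atTop]
      intro ε hε
      set m : ℝ := (K+1)/ε + 1 with hmdef
      have hmpos : 0 < m := by positivity
      have hm : (K+1)/m < ε := by
        rw [div_lt_iff₀ hmpos, hmdef, mul_add, mul_one, mul_div_cancel₀ _ hε.ne']
        linarith
      obtain ⟨Nm, hNm⟩ := Filter.eventually_atTop.mp (keyGap m)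
      refine ⟨Nm, fun n hn => ?_⟩
      have hk1 : N ≤ max n N := le_max_right n N
      have hk2 : Nm ≤ max n N := le_trans hn (le_max_left n N)
      have hBm : m * t (max n N) ≤ B (max n N) :=
        le_csInf (hTne _ hk1) (fun x hx => (hNm _ hk2 x hx.1 hx.2).le)
      have htp := tpos (max n N)
      have hBp : 0 < B (max n N) := lt_of_lt_of_le (by positivity) hBm
      rw [Real.dist_eq, sub_zero, abs_of_nonneg (div_nonneg (hApos _).le hBp.le)]
      calc A (max n N) / B (max n N)
          ≤ ((K+1) * t (max n N)) / (m * t (max n N)) :=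
            div_le_div₀ (by positivity) (hA2 _) (by positivity) hBm
        _ = (K+1)/m := mul_div_mul_right _ _ htp.ne'
        _ < ε := hm
    have hfun : (fun n => (B (max n N) - A (max n N)) / B (max n N))
        = fun n => 1 - A (max n N) / B (max n N) := by
      funext n
      have hBp : 0 < B (max n N) := hBpos _ (le_max_right n N)
      rw [sub_div, div_self hBp.ne']
    rw [hfun]
    have h1 := hdiv.const_sub 1
    simpa using h1
  · -- Asymp
    refine asymp_of_threshold t _ tpos (fun n => hApos _) N (1/2) (K+2)
      (by norm_num) (by linarith) ?_
    intro n hn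
    rw [max_eq_left hn]
    have h1 := hA1 n
    have h2 := hA2 n
    have h3 := tpos n
    constructor <;> nlinarith
end

section
/- Let E ⊆ [0,∞) with 0 an accumulation point of E. Then C_E = R*(Ω_0^E(n)) as elements of [0,∞]. -/
open Filter Topology Set
open scoped ENNReal

section Aux

open Filter Topology Set

/-- An almost decreasing sequence is nonincreasing on a tail. -/
lemma almostDecreasing_tail {t : ℕ → ℝ} (h : AlmostDecreasing t) :
    ∃ N : ℕ, ∀ i j : ℕ, N ≤ i → i ≤ j → t j ≤ t i := by
  obtain ⟨N, hN⟩ := eventually_atTop.mp h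
  refine ⟨N, fun i j hNi hij => ?_⟩
  induction j, hij using Nat.le_induction with
  | base => exact le_rfl
  | succ n hn ih => exact (hN n (hNi.trans hn)).trans ih

/-- From the accumulation hypothesis we extract a strictly positive, strictly
decreasing sequence in `E` tending to `0` (with explicit speed bound). -/
lemma exists_base (E : Set ℝ) (hE : E ⊆ Ici 0) (hacc : (0 : ℝ) ∈ closure (E \ {0})) :
    ∃ t : ℕ → ℝ, (∀ n, t n ∈ E) ∧ (∀ n, 0 < t n) ∧
      (∀ n, t (n + 1) < min (t n) (1 / (n + 1))) := by
  have key : ∀ δ : ℝ, 0 < δ → ∃ x : ℝ, x ∈ E ∧ 0 < x ∧ x < δ := by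
    intro δ hδ
    rcases Metric.mem_closure_iff.mp hacc δ hδ with ⟨y, hy, hdist⟩
    have hy0 : 0 < y := lt_of_le_of_ne (hE hy.1) (Ne.symm hy.2)
    refine ⟨y, hy.1, hy0, ?_⟩
    simpa [Real.dist_eq, abs_of_pos hy0] using hdist
  let F : ℕ → {x : ℝ // x ∈ E ∧ 0 < x} := fun n => Nat.rec
    ⟨(key 1 one_pos).choose, (key 1 one_pos).choose_spec.1,
      (key 1 one_pos).choose_spec.2.1⟩
    (fun n p =>
      ⟨(key (min p.1 (1 / (n + 1))) (lt_min p.2.2 (by positivity))).choose,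
        (key (min p.1 (1 / (n + 1))) (lt_min p.2.2 (by positivity))).choose_spec.1,
        (key (min p.1 (1 / (n + 1))) (lt_min p.2.2 (by positivity))).choose_spec.2.1⟩) n
  refine ⟨fun n => (F n).1, fun n => (F n).2.1, fun n => (F n).2.2, fun n => ?_⟩
  exact (key (min (F n).1 (1 / (n + 1)))
    (lt_min (F n).2.2 (by positivity))).choose_spec.2.2

/-- Key lemma: if `R*(E) < ofReal L₁`, then for any `K ≥ L₁` the annuli
`[L₁ τ n, K τ n]` eventually miss `E`. -/
lemma key_annulus (E : Set ℝ) (τ : ℕ → ℝ) (hτE : ∀ n, τ n ∈ E) (hτpos : ∀ n, 0 < τ n)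
    (hτdec : AlmostDecreasing τ) (hτ0 : Tendsto τ atTop (𝓝 0))
    {L₁ K : ℝ} (hK : L₁ ≤ K) (hR : RstarE E < ENNReal.ofReal L₁) :
    ∀ᶠ n in atTop, E ∩ Icc (L₁ * τ n) (K * τ n) = ∅ := by
  by_contra h
  rw [Filter.not_eventually] at h
  have h' : ∃ᶠ n in atTop, ∃ x, x ∈ E ∧ L₁ * τ n ≤ x ∧ x ≤ K * τ n := by
    refine h.mono fun n hn => ?_
    rcases Set.nonempty_iff_ne_empty.2 hn with ⟨x, hx⟩
    exact ⟨x, hx.1, hx.2.1, hx.2.2⟩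
  obtain ⟨φ, hφ, hφP⟩ := Filter.extraction_of_frequently_atTop h'
  choose x hxE hx1 hx2 using hφP
  have hu : ∀ n, x n / τ (φ n) ∈ Icc L₁ K := fun n =>
    ⟨(le_div_iff₀ (hτpos (φ n))).2 (hx1 n), (div_le_iff₀ (hτpos (φ n))).2 (hx2 n)⟩
  obtain ⟨L, hLmem, ψ, hψ, hψu⟩ :=
    (isCompact_Icc (a := L₁) (b := K)).tendsto_subseq hu
  obtain ⟨N₀, hmono⟩ := almostDecreasing_tail hτdec
  have hsm : StrictMono (φ ∘ ψ) := hφ.comp hψ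
  have hrmem : ENNReal.ofReal L ∈ {c : ℝ≥0∞ | ∃ (r s : ℕ → ℝ) (L : ℝ), IsNormalE E r ∧
      (∀ n, s n ∈ E) ∧ Tendsto (fun n => s n / r n) atTop (𝓝 L) ∧
      c = ENNReal.ofReal L} := by
    refine ⟨fun n => τ (φ (ψ n)), fun n => x (ψ n), L, ⟨⟨fun n => hτpos _, ?_⟩,
      fun n => τ (φ (ψ n)), fun n => hτE _, ?_, ?_⟩, fun n => hxE _, hψu, rfl⟩
    · exact hτ0.comp hsm.tendsto_atTop
    · refine eventually_atTop.2 ⟨N₀, fun n hn => ?_⟩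
      exact hmono (φ (ψ n)) (φ (ψ (n + 1))) (hn.trans hsm.le_apply)
        (hsm.monotone (Nat.le_succ n))
    · refine Tendsto.congr (fun n => ?_) tendsto_const_nhds
      exact (div_self (hτpos (φ (ψ n))).ne').symm
  have h1 : ENNReal.ofReal L₁ ≤ ENNReal.ofReal L := ENNReal.ofReal_le_ofReal hLmem.1
  exact absurd (h1.trans (le_sSup hrmem)) (not_le.2 hR)

end Aux

/-- Proposition 4.6, `C_E = R*(Ω₀ᴱ(n))`. -/
theorem stmt9 (E : Set ℝ) (hE : E ⊆ Ici 0) (hacc : (0 : ℝ) ∈ closure (E \ {0})) :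
    Ctot E = RstarE E := by
  obtain ⟨t, htE, htpos, htlt⟩ := exists_base E hE hacc
  have htdec : ∀ n, t (n + 1) ≤ t n := fun n => (lt_min_iff.mp (htlt n)).1.le
  have ht0 : Tendsto t atTop (𝓝 0) := by
    have hshift : Tendsto (fun n : ℕ => t (n + 1)) atTop (𝓝 0) := by
      refine squeeze_zero' (Eventually.of_forall fun n => (htpos _).le)
        (Eventually.of_forall fun n => (lt_min_iff.mp (htlt n)).2.le) ?_
      exact tendsto_one_div_add_atTop_nhds_zero_nat
    exact (tendsto_add_atTop_iff_nat 1).mp hshift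
  have hdivself : ∀ u : ℕ → ℝ, (∀ n, 0 < u n) → Tendsto (fun n => u n / u n) atTop (𝓝 1) :=
    fun u hu => Tendsto.congr (fun n => (div_self (hu n).ne').symm) tendsto_const_nhds
  have hone : (1 : ℝ≥0∞) ≤ RstarE E := by
    refine le_sSup ⟨t, t, 1, ⟨⟨htpos, ht0⟩, t, htE,
      Eventually.of_forall fun n => htdec n, hdivself t htpos⟩, htE, hdivself t htpos,
      ENNReal.ofReal_one.symm⟩
  refine le_antisymm ?_ ?_
  · -- Ctot ≤ RstarE
    rcases eq_top_or_lt_top (RstarE E) with htop | hfin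
    · rw [htop]; exact le_top
    by_contra hcon
    have hlt : RstarE E < Ctot E := not_le.mp hcon
    have hlt' : ∃ τ ∈ {u : ℕ → ℝ | MemE0d E u}, RstarE E < Ctau E τ := by
      by_contra hno; push_neg at hno
      exact absurd (iSup₂_le fun τ hτ => hno τ hτ) (not_le.2 hlt)
    obtain ⟨τ, hτS, hRτ⟩ := hlt'
    obtain ⟨hτdec, hτmem, hτ0⟩ := hτS
    have hτE : ∀ n, τ n ∈ E := fun n => (hτmem n).1
    have hτpos : ∀ n, 0 < τ n :=
      fun n => (hE (hτE n)).lt_of_ne fun h0 => (hτmem n).2 h0.symm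
    obtain ⟨c, hc1, hc2⟩ := exists_between hRτ
    have hcne : c ≠ ⊤ := ne_top_of_lt hc2
    set L₁ : ℝ := c.toReal with hL₁def
    have hcofReal : ENNReal.ofReal L₁ = c := ENNReal.ofReal_toReal hcne
    have hL₁R : RstarE E < ENNReal.ofReal L₁ := by rw [hcofReal]; exact hc1
    have hL₁1 : 1 < L₁ := by
      have h1c : (1 : ℝ≥0∞) < c := lt_of_le_of_lt hone hc1
      have := (ENNReal.toReal_lt_toReal ENNReal.one_ne_top hcne).mpr h1c
      simpa using this
    have hL₁0 : 0 < L₁ := lt_trans one_pos hL₁1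
    obtain ⟨N₀, hmono⟩ := almostDecreasing_tail hτdec
    obtain ⟨N₁, hN₁⟩ := eventually_atTop.mp
      (key_annulus E τ hτE hτpos hτdec hτ0 (K := L₁ + 1) (by linarith) hL₁R)
    obtain ⟨N₂, hN₂⟩ := eventually_atTop.mp
      ((show Tendsto (fun n => L₁ * τ n) atTop (𝓝 0) by
        simpa using hτ0.const_mul L₁).eventually_lt_const (htpos 0))
    set A : ℕ → ℝ := fun m => sSup (E ∩ Icc 0 (L₁ * τ m)) with hA
    set B : ℕ → ℝ := fun m => sInf (E ∩ Ioi (L₁ * τ m)) with hB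
    set N : ℕ := max (max N₀ N₁) N₂ with hNdef
    have hAne : ∀ m, (E ∩ Icc 0 (L₁ * τ m)).Nonempty :=
      fun m => ⟨τ m, hτE m, (hτpos m).le, by nlinarith [hτpos m]⟩
    have hAbdd : ∀ m, BddAbove (E ∩ Icc 0 (L₁ * τ m)) :=
      fun m => ⟨L₁ * τ m, fun x hx => hx.2.2⟩
    have hAle : ∀ m, A m ≤ L₁ * τ m := fun m => csSup_le (hAne m) fun x hx => hx.2.2
    have hAge : ∀ m, τ m ≤ A m :=
      fun m => le_csSup (hAbdd m) ⟨hτE m, (hτpos m).le, by nlinarith [hτpos m]⟩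
    have hBne : ∀ m, N₂ ≤ m → (E ∩ Ioi (L₁ * τ m)).Nonempty :=
      fun m hm => ⟨t 0, htE 0, hN₂ m hm⟩
    have hBbdd : ∀ m, BddBelow (E ∩ Ioi (L₁ * τ m)) := fun m => ⟨0, fun x hx => hE hx.1⟩
    have hBgeK : ∀ K' m, N₂ ≤ m → E ∩ Icc (L₁ * τ m) (K' * τ m) = ∅ → K' * τ m ≤ B m := by
      intro K' m hm hemp
      refine le_csInf (hBne m hm) fun x hx => ?_
      by_contra hlt2; push_neg at hlt2
      have hxmem : x ∈ E ∩ Icc (L₁ * τ m) (K' * τ m) := ⟨hx.1, le_of_lt hx.2, hlt2.le⟩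
      rw [hemp] at hxmem; exact hxmem
    have hgap : ∀ m, N ≤ m → IsGapComponent E (A m) (B m) := by
      intro m hm
      have hm1 : N₁ ≤ m := le_trans (le_trans (le_max_right N₀ N₁) (le_max_left _ N₂)) hm
      have hm2 : N₂ ≤ m := le_trans (le_max_right _ N₂) hm
      have hBm : (L₁ + 1) * τ m ≤ B m := hBgeK (L₁ + 1) m hm2 (hN₁ m hm1)
      have hAB : A m < B m :=
        lt_of_le_of_lt (hAle m) (lt_of_lt_of_le (by nlinarith [hτpos m]) hBm)
      refine ⟨le_trans (hτpos m).le (hAge m), hAB, ?_, ?_⟩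
      · rw [Set.eq_empty_iff_forall_notMem]
        rintro x ⟨⟨hax, hxb⟩, hxE⟩
        rcases le_or_gt x (L₁ * τ m) with h | h
        · exact absurd (le_csSup (hAbdd m) ⟨hxE, hE hxE, h⟩) (not_le.2 hax)
        · exact absurd (csInf_le (hBbdd m) ⟨hxE, h⟩) (not_le.2 hxb)
      · intro a' b' ha'0 ha' hb' hemp
        constructor
        · by_contra hne
          obtain ⟨e, heS, hae⟩ := exists_lt_of_lt_csSup (hAne m) (lt_of_le_of_ne ha' hne)
          have hmem2 : e ∈ Ioo a' b' ∩ E :=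
            ⟨⟨hae, lt_of_le_of_lt (le_csSup (hAbdd m) heS) (lt_of_lt_of_le hAB hb')⟩, heS.1⟩
          rw [hemp] at hmem2; exact hmem2.elim
        · by_contra hne
          obtain ⟨e, heS, heb⟩ :=
            exists_lt_of_csInf_lt (hBne m hm2) (lt_of_le_of_ne hb' (Ne.symm hne))
          have hmem2 : e ∈ Ioo a' b' ∩ E :=
            ⟨⟨lt_of_le_of_lt (le_trans ha' (hAle m)) heS.2, heb⟩, heS.1⟩
          rw [hemp] at hmem2; exact hmem2.elim
    set a : ℕ → ℝ := fun n => A (max n N) with ha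
    set b : ℕ → ℝ := fun n => B (max n N) with hb
    have hbpos : ∀ n, 0 < b n := fun n => by
      have hg := hgap (max n N) (le_max_right n N)
      exact lt_of_le_of_lt hg.1 hg.2.1
    have hKtends : Tendsto (fun n => a n / b n) atTop (𝓝 0) := by
      rw [Metric.tendsto_atTop]
      intro ε hε
      have hdivnn : 0 ≤ L₁ / ε := div_nonneg hL₁0.le hε.le
      obtain ⟨K', hK'⟩ : ∃ K' : ℝ, K' = L₁ / ε + L₁ + 1 := ⟨_, rfl⟩
      have hK'L : L₁ ≤ K' := by rw [hK']; linarith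
      have hK'pos : 0 < K' := lt_of_lt_of_le hL₁0 hK'L
      obtain ⟨M, hM⟩ := eventually_atTop.mp (key_annulus E τ hτE hτpos hτdec hτ0 hK'L hL₁R)
      refine ⟨max N M, fun n hn => ?_⟩
      have hnN : N ≤ n := le_trans (le_max_left N M) hn
      have hnM : M ≤ n := le_trans (le_max_right N M) hn
      have hmax : max n N = n := max_eq_left hnN
      have hm2 : N₂ ≤ n := le_trans (le_max_right _ N₂) hnN
      have hBn : K' * τ n ≤ B n := hBgeK K' n hm2 (hM n hnM)
      have h2 : a n / b n ≤ (L₁ * τ n) / (K' * τ n) := by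
        show A (max n N) / B (max n N) ≤ _
        rw [hmax]
        exact div_le_div₀ (mul_nonneg hL₁0.le (hτpos n).le) (hAle n) (mul_pos hK'pos (hτpos n)) hBn
      rw [mul_div_mul_right _ _ (hτpos n).ne'] at h2
      have h3 : L₁ / K' < ε := by
        rw [div_lt_iff₀ hK'pos, hK']
        have hexp : ε * (L₁ / ε + L₁ + 1) = L₁ + ε * L₁ + ε := by
          field_simp
        have hpos2 : 0 < ε * L₁ := mul_pos hε hL₁0
        linarith
      have h0 : 0 ≤ a n / b n :=
        div_nonneg (le_trans (hτpos _).le (hAge _)) (hbpos n).le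
      rw [Real.dist_0_eq_abs, abs_of_nonneg h0]
      linarith
    have hmemIE : MemIE E a b := by
      refine ⟨fun n => hgap _ (le_max_right n N), ?_, ?_, ?_⟩
      · refine eventually_atTop.2 ⟨N, fun n hn => ?_⟩
        have h1 : max (n + 1) N = n + 1 := max_eq_left (hn.trans (Nat.le_succ n))
        have h2 : max n N = n := max_eq_left hn
        show A (max (n + 1) N) ≤ A (max n N)
        rw [h1, h2]
        have hτm : τ (n + 1) ≤ τ n := hmono n (n + 1)
          (le_trans (le_trans (le_max_left N₀ N₁) (le_max_left _ N₂)) hn) (Nat.le_succ n)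
        exact csSup_le_csSup (hAbdd n) (hAne (n + 1)) fun x hx =>
          ⟨hx.1, hx.2.1, hx.2.2.trans (mul_le_mul_of_nonneg_left hτm hL₁0.le)⟩
      · refine squeeze_zero' (Eventually.of_forall fun n => le_trans (hτpos _).le (hAge _))
          (eventually_atTop.2 ⟨N, fun n hn => ?_⟩) (by simpa using hτ0.const_mul L₁)
        show A (max n N) ≤ L₁ * τ n
        rw [max_eq_left hn]; exact hAle n
      · have heq : ∀ᶠ n in atTop, 1 - a n / b n = (b n - a n) / b n :=
          Eventually.of_forall fun n => by
            rw [sub_div, div_self (hbpos n).ne']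
        have htend : Tendsto (fun n => 1 - a n / b n) atTop (𝓝 1) := by
          simpa using tendsto_const_nhds.sub hKtends
        exact htend.congr' heq
    have hτa : ∀ᶠ n in atTop, τ n ≤ a n := eventually_atTop.2 ⟨N, fun n hn => by
      show τ n ≤ A (max n N); rw [max_eq_left hn]; exact hAge n⟩
    have hev : ∀ᶠ n in atTop, ENNReal.ofReal (a n / τ n) ≤ ENNReal.ofReal L₁ := by
      refine eventually_atTop.2 ⟨N, fun n hn => ?_⟩
      apply ENNReal.ofReal_le_ofReal
      rw [div_le_iff₀ (hτpos n)]
      show A (max n N) ≤ L₁ * τ n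
      rw [max_eq_left hn]; exact hAle n
    have hlimsup : limsup (fun n => ENNReal.ofReal (a n / τ n)) atTop ≤ ENNReal.ofReal L₁ :=
      Filter.limsup_le_of_le (by isBoundedDefault) hev
    have hCle : Ctau E τ ≤ ENNReal.ofReal L₁ :=
      le_trans (sInf_le ⟨a, b, hmemIE, hτa, rfl⟩) hlimsup
    rw [hcofReal] at hCle
    exact absurd hc2 (not_lt.2 hCle)
  · -- RstarE ≤ Ctot
    refine sSup_le ?_
    rintro c ⟨r, s, L, ⟨⟨hrpos, hr0⟩, s₁, hs₁E, hs₁dec, hs₁r⟩, hsE, hsr, rfl⟩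
    have hs₁0 : Tendsto s₁ atTop (𝓝 0) := by
      refine Tendsto.congr (fun n => div_mul_cancel₀ (s₁ n) (hrpos n).ne') ?_
      simpa using hs₁r.mul hr0
    have hs₁pos : ∀ᶠ n in atTop, 0 < s₁ n := by
      have h := hs₁r.eventually_const_lt (by norm_num : (0 : ℝ) < 1)
      refine h.mono fun n hn => ?_
      rcases div_pos_iff.mp hn with h' | h'
      · exact h'.1
      · exact absurd (hrpos n) (not_lt.2 h'.2.le)
    set τ : ℕ → ℝ := fun n => if 0 < s₁ n then s₁ n else t 0 with hτdef
    have hτeq : τ =ᶠ[atTop] s₁ := hs₁pos.mono fun n hn => if_pos hn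
    have hτpos' : ∀ n, 0 < τ n := fun n => by
      show 0 < if 0 < s₁ n then s₁ n else t 0
      split_ifs with h
      exacts [h, htpos 0]
    have hτE0d : MemE0d E τ := by
      refine ⟨?_, ?_, ?_⟩
      · obtain ⟨M₁, h₁⟩ := eventually_atTop.mp hs₁pos
        obtain ⟨M₂, h₂⟩ := eventually_atTop.mp hs₁dec
        refine eventually_atTop.2 ⟨max M₁ M₂, fun n hn => ?_⟩
        have hn1 : M₁ ≤ n := le_trans (le_max_left _ _) hn
        have hn2 : M₂ ≤ n := le_trans (le_max_right _ _) hn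
        show (if 0 < s₁ (n + 1) then s₁ (n + 1) else t 0) ≤ (if 0 < s₁ n then s₁ n else t 0)
        rw [if_pos (h₁ (n + 1) (hn1.trans (Nat.le_succ n))), if_pos (h₁ n hn1)]
        exact h₂ n hn2
      · intro n
        show (if 0 < s₁ n then s₁ n else t 0) ∈ E \ {0}
        split_ifs with h
        · exact ⟨hs₁E n, by simp [h.ne']⟩
        · exact ⟨htE 0, by simp [(htpos 0).ne']⟩
      · exact hs₁0.congr' hτeq.symm
    have hsτ : Tendsto (fun n => s n / τ n) atTop (𝓝 L) := by
      have hdiv : Tendsto (fun n => (s n / r n) / (s₁ n / r n)) atTop (𝓝 L) := by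
        simpa [Pi.div_def] using hsr.div hs₁r one_ne_zero
      refine hdiv.congr' ?_
      refine hs₁pos.mono fun n hn => ?_
      have hr' : r n ≠ 0 := (hrpos n).ne'
      have hs' : s₁ n ≠ 0 := hn.ne'
      show (s n / r n) / (s₁ n / r n) = s n / τ n
      rw [show τ n = s₁ n from if_pos hn]
      field_simp
    have hL0 : 0 ≤ L := ge_of_tendsto' hsr fun n => div_nonneg (hE (hsE n)) (hrpos n).le
    have hCτ : ENNReal.ofReal L ≤ Ctau E τ := by
      refine le_sInf ?_
      rintro c' ⟨a, b, ⟨hgap', hadec, ha0, hba⟩, hτa, rfl⟩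
      by_contra hcon
      push_neg at hcon
      obtain ⟨c'', h1, h2⟩ := exists_between hcon
      have hc''ne : c'' ≠ ⊤ := ne_top_of_lt h2
      set L'' : ℝ := c''.toReal with hL''def
      have hL''L : L'' < L := (ENNReal.lt_ofReal_iff_toReal_lt hc''ne).mp h2
      have hEv1 : ∀ᶠ n in atTop, a n / τ n < L'' := by
        have h := Filter.eventually_lt_of_limsup_lt h1
        refine h.mono fun n hn => ?_
        by_contra hge; push_neg at hge
        have : c'' ≤ ENNReal.ofReal (a n / τ n) := by
          rw [← ENNReal.ofReal_toReal hc''ne]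
          exact ENNReal.ofReal_le_ofReal hge
        exact absurd hn (not_lt.2 this)
      have hEv2 : ∀ᶠ n in atTop, L'' < s n / τ n := hsτ.eventually_const_lt hL''L
      have hEv3 : ∀ᶠ n in atTop, s n / τ n < L + 1 :=
        hsτ.eventually_lt_const (by linarith)
      have hbpos' : ∀ n, 0 < b n := fun n => lt_of_le_of_lt (hgap' n).1 (hgap' n).2.1
      have habdiv : Tendsto (fun n => a n / b n) atTop (𝓝 0) := by
        have heq : ∀ᶠ n in atTop, 1 - (b n - a n) / b n = a n / b n :=
          Eventually.of_forall fun n => by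
            rw [sub_div, div_self (hbpos' n).ne']; ring
        have htend : Tendsto (fun n => 1 - (b n - a n) / b n) atTop (𝓝 0) := by
          have := (tendsto_const_nhds (x := (1:ℝ)) (f := atTop)).sub hba
          simpa using this
        exact htend.congr' heq
      have hEv4 : ∀ᶠ n in atTop, a n / b n < 1 / (L + 1) :=
        habdiv.eventually_lt_const (by positivity)
      obtain ⟨n, h1', h2', h3', h4', h5'⟩ :=
        (hEv1.and (hEv2.and (hEv3.and (hEv4.and hτa)))).exists
      have hτn : 0 < τ n := hτpos' n
      have has : a n < s n := by
        have hlt3 : a n / τ n < s n / τ n := lt_trans h1' h2'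
        exact (div_lt_div_iff_of_pos_right hτn).mp hlt3
      have hbs : b n ≤ s n := by
        by_contra hlt4; push_neg at hlt4
        have hmem3 : s n ∈ Ioo (a n) (b n) ∩ E := ⟨⟨has, hlt4⟩, hsE n⟩
        rw [(hgap' n).2.2.1] at hmem3; exact hmem3.elim
      have hsL : s n < (L + 1) * τ n := (div_lt_iff₀ hτn).mp h3'
      have hlow : 1 / (L + 1) < τ n / b n := by
        rw [div_lt_div_iff₀ (by linarith) (hbpos' n)]
        nlinarith
      have hmono' : τ n / b n ≤ a n / b n := (div_le_div_iff_of_pos_right (hbpos' n)).mpr h5'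
      linarith
    exact hCτ.trans (le_biSup (fun u => Ctau E u) hτE0d)
end

section
/- Let (X,d,p) be a pointed metric space and E = S_p(X) = {d(x,p) : x ∈ X}. The family Ω_p^X(n) is uniformly bounded (i.e., R*(Ω_p^X(n)) < ∞) if and only if E is completely strongly porous at 0. Moreover, if Ω_p^X(n) is uniformly bounded and p is an accumulation point of X, then R*(Ω_p^X(n)) = M(L̃) for every universal element L̃ of Ĩ_Eᵈ. -/
open Filter Topology Set
open scoped ENNReal

/-! ### Auxiliary development -/

section AuxBasic

/-- Limits achievable by ratios of `E`-valued sequences over almost decreasing positive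
`E`-valued null sequences. -/
def RD (E : Set ℝ) (L : ℝ) : Prop :=
  ∃ τ s : ℕ → ℝ, (∀ n, τ n ∈ E) ∧ (∀ n, 0 < τ n) ∧ AlmostDecreasing τ ∧
    Tendsto τ atTop (𝓝 0) ∧ (∀ n, s n ∈ E) ∧
    Tendsto (fun n => s n / τ n) atTop (𝓝 L)

lemma almostDecreasing_anti {t : ℕ → ℝ} (h : AlmostDecreasing t) :
    ∃ N, ∀ ⦃i j : ℕ⦄, N ≤ i → i ≤ j → t j ≤ t i := by
  rcases eventually_atTop.1 h with ⟨N, hN⟩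
  refine ⟨N, fun i j hNi hij => ?_⟩
  induction j with
  | zero =>
    have : i = 0 := by omega
    simp [this]
  | succ k ih =>
    rcases Nat.lt_or_ge i (k+1) with hlt | hge
    · exact le_trans (hN k (by omega)) (ih (by omega))
    · have : i = k + 1 := by omega
      simp [this]

lemma almostDecreasing_of_strict {t : ℕ → ℝ} (h : ∀ n, t (n+1) < t n) :
    AlmostDecreasing t :=
  Eventually.of_forall fun n => (h n).le

lemma almostDecreasing_shift {t : ℕ → ℝ} (h : AlmostDecreasing t) (N : ℕ) :
    AlmostDecreasing (fun n => t (n + N)) := by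
  rcases eventually_atTop.1 h with ⟨M, hM⟩
  exact eventually_atTop.2 ⟨M, fun n hn => by
    show t (n + 1 + N) ≤ t (n + N)
    have := hM (n + N) (by omega)
    have heq : n + N + 1 = n + 1 + N := by omega
    rwa [heq] at this⟩

lemma almostDecreasing_comp {t : ℕ → ℝ} (h : AlmostDecreasing t)
    {φ : ℕ → ℕ} (hφ : StrictMono φ) : AlmostDecreasing (t ∘ φ) := by
  rcases almostDecreasing_anti h with ⟨N, hN⟩
  refine eventually_atTop.2 ⟨N, fun n hn => ?_⟩
  exact hN (le_trans hn (hφ.id_le n)) (hφ.monotone (Nat.le_succ n))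

end AuxBasic

section GapLemmas

variable {E : Set ℝ} {a b : ℝ}

lemma gap_nonneg (h : IsGapComponent E a b) : 0 ≤ a := h.1
lemma gap_lt (h : IsGapComponent E a b) : a < b := h.2.1

lemma gap_notmem (h : IsGapComponent E a b) {x : ℝ} (hx : x ∈ E) :
    x ≤ a ∨ b ≤ x := by
  by_contra hcon
  push_neg at hcon
  have : x ∈ Ioo a b ∩ E := ⟨⟨hcon.1, hcon.2⟩, hx⟩
  simp [h.2.2.1] at this

/-- points of `E` approximate the right endpoint of a gap from the right. -/
lemma gap_right_mem (h : IsGapComponent E a b) {ε : ℝ} (hε : 0 < ε) :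
    ∃ e ∈ E, b ≤ e ∧ e < b + ε := by
  by_contra hcon
  push_neg at hcon
  have hempty : Ioo a (b + ε) ∩ E = ∅ := by
    ext x
    simp only [mem_inter_iff, mem_Ioo, mem_empty_iff_false, iff_false, not_and]
    intro hx hxE
    rcases lt_or_ge x b with hlt | hge
    · have : x ∈ Ioo a b ∩ E := ⟨⟨hx.1, hlt⟩, hxE⟩
      simp [h.2.2.1] at this
    · exact absurd hx.2 (not_lt.2 (hcon x hxE hge))
  have := (h.2.2.2 a (b + ε) h.1 le_rfl (by linarith) hempty).2
  linarith

/-- points of `E` approximate the left endpoint of a gap from the left, provided `a > 0`. -/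
lemma gap_left_mem (h : IsGapComponent E a b) (ha : 0 < a) {ε : ℝ} (hε : 0 < ε) :
    ∃ e ∈ E, a - ε < e ∧ e ≤ a := by
  by_contra hcon
  push_neg at hcon
  have hempty : Ioo (max 0 (a - ε)) b ∩ E = ∅ := by
    ext x
    simp only [mem_inter_iff, mem_Ioo, mem_empty_iff_false, iff_false, not_and]
    intro hx hxE
    rcases le_or_gt x a with hle | hlt
    · exact absurd (hcon x hxE (lt_of_le_of_lt (le_max_right _ _) hx.1)) (not_lt.2 hle)
    · have : x ∈ Ioo a b ∩ E := ⟨⟨hlt, hx.2⟩, hxE⟩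
      simp [h.2.2.1] at this
  have := (h.2.2.2 (max 0 (a - ε)) b (le_max_left _ _)
      (max_le h.1 (by linarith)) le_rfl hempty).1
  have h2 : max 0 (a - ε) < a := max_lt ha (by linarith)
  linarith [this]

/-- With `0` an accumulation point of `E ∩ (0,∞)`, every gap endpoint is positive. -/
lemma gap_pos (hacc : ∀ ε : ℝ, 0 < ε → ∃ e ∈ E, 0 < e ∧ e < ε)
    (h : IsGapComponent E a b) : 0 < a := by
  rcases h.1.lt_or_eq with hlt | heq
  · exact hlt
  · exfalso
    rcases hacc b (by linarith [h.2.1]) with ⟨e, heE, he0, heb⟩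
    have : e ∈ Ioo a b ∩ E := ⟨⟨heq ▸ he0, heb⟩, heE⟩
    simp [h.2.2.1] at this

lemma gap_unique_right {b' : ℝ} (h : IsGapComponent E a b) (h' : IsGapComponent E a b') :
    b = b' := by
  rcases le_total b b' with hle | hle
  · exact ((h.2.2.2 a b' h.1 le_rfl hle h'.2.2.1).2).symm
  · exact (h'.2.2.2 a b h'.1 le_rfl hle h.2.2.1).2

/-- Two gap components with `a' < a` satisfy `b' ≤ a`. -/
lemma gap_disjoint {a' b' : ℝ} (h : IsGapComponent E a b) (h' : IsGapComponent E a' b')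
    (hlt : a' < a) : b' ≤ a := by
  by_contra hcon
  push_neg at hcon
  have hempty : Ioo a' (max b b') ∩ E = ∅ := by
    ext x
    simp only [mem_inter_iff, mem_Ioo, mem_empty_iff_false, iff_false, not_and]
    intro hx hxE
    rcases lt_or_ge x b' with hlt2 | hge
    · have : x ∈ Ioo a' b' ∩ E := ⟨⟨hx.1, hlt2⟩, hxE⟩
      simp [h'.2.2.1] at this
    · have hxa : a < x := lt_of_lt_of_le hcon hge
      have hxb : x < b := by
        rcases max_choice b b' with hc | hc
        · rw [hc] at hx; exact hx.2
        · rw [hc] at hx; exact absurd hx.2 (not_lt.2 hge)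
      have : x ∈ Ioo a b ∩ E := ⟨⟨hxa, hxb⟩, hxE⟩
      simp [h.2.2.1] at this
  have := (h.2.2.2 a' (max b b') h'.1 hlt.le (le_max_left _ _) hempty).1
  linarith

end GapLemmas

section Ratio

variable {E : Set ℝ}

lemma memIE_bpos {a b : ℕ → ℝ} (h : MemIE E a b) (n : ℕ) : 0 < b n :=
  lt_of_le_of_lt (h.1 n).1 (h.1 n).2.1

lemma memIE_div_tendsto {a b : ℕ → ℝ} (h : MemIE E a b) :
    Tendsto (fun n => a n / b n) atTop (𝓝 0) := by
  have h1 : Tendsto (fun n => 1 - (b n - a n) / b n) atTop (𝓝 (1 - 1)) :=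
    tendsto_const_nhds.sub h.2.2.2
  rw [sub_self] at h1
  refine h1.congr fun n => ?_
  have hb := (memIE_bpos h n).ne'
  field_simp
  ring

lemma ratio_tendsto_one {a b : ℕ → ℝ} (hb : ∀ n, 0 < b n)
    (h : Tendsto (fun n => a n / b n) atTop (𝓝 0)) :
    Tendsto (fun n => (b n - a n) / b n) atTop (𝓝 1) := by
  have h1 : Tendsto (fun n => 1 - a n / b n) atTop (𝓝 (1 - 0)) :=
    tendsto_const_nhds.sub h
  rw [sub_zero] at h1
  refine h1.congr fun n => ?_
  have hbn := (hb n).ne'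
  field_simp

end Ratio

section RDconv

/-- The distance spectrum. -/
def SE {X : Type*} [MetricSpace X] (p : X) : Set ℝ := {t : ℝ | ∃ x : X, dist x p = t}

variable {X : Type*} [MetricSpace X] {p : X}

lemma RD_le_RstarX {L : ℝ} (h : RD (SE p) L) : ENNReal.ofReal L ≤ RstarX p := by
  obtain ⟨τ, s, hτE, hτpos, hτad, hτ0, hsE, hlim⟩ := h
  choose y hy using hτE
  choose z hz using hsE
  apply le_sSup
  have hτfun : (fun n => dist (y n) p) = τ := funext hy
  refine ⟨τ, z, L, ⟨⟨hτpos, hτ0⟩, y, by rw [hτfun]; exact hτad, ?_⟩, ?_, rfl⟩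
  · have : (fun n => dist (y n) p / τ n) = fun n => (1:ℝ) := by
      funext n; rw [hy n, div_self (hτpos n).ne']
    rw [this]; exact tendsto_const_nhds
  · have : (fun n => dist (z n) p / τ n) = fun n => s n / τ n := by
      funext n; rw [hz n]
    rw [this]; exact hlim

lemma RD_lt_K (hfin : RstarX p < ⊤) {L : ℝ} (h : RD (SE p) L) :
    L < (RstarX p).toReal + 1 := by
  rcases le_or_gt L 0 with hL | hL
  · have : (0:ℝ) ≤ (RstarX p).toReal := ENNReal.toReal_nonneg
    linarith
  · have h1 := RD_le_RstarX h
    have h2 : L = (ENNReal.ofReal L).toReal := (ENNReal.toReal_ofReal hL.le).symm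
    have h3 : (ENNReal.ofReal L).toReal ≤ (RstarX p).toReal :=
      ENNReal.toReal_mono hfin.ne h1
    linarith

lemma mem_RstarX_RD {c : ℝ≥0∞}
    (hc : c ∈ {c : ℝ≥0∞ | ∃ (r : ℕ → ℝ) (x : ℕ → X) (L : ℝ), IsNormalX p r ∧
      Tendsto (fun n => dist (x n) p / r n) atTop (𝓝 L) ∧ c = ENNReal.ofReal L}) :
    ∃ L, 0 ≤ L ∧ c = ENNReal.ofReal L ∧ RD (SE p) L := by
  obtain ⟨r, x, L, ⟨⟨hrpos, hr0⟩, y, hyad, hyone⟩, hxlim, rfl⟩ := hc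
  refine ⟨L, ?_, rfl, ?_⟩
  · exact ge_of_tendsto hxlim (Eventually.of_forall fun n =>
      div_nonneg dist_nonneg (hrpos n).le)
  · have hevpos : ∀ᶠ n in atTop, 0 < dist (y n) p := by
      have h12 := hyone.eventually (eventually_gt_nhds (by norm_num : (1:ℝ)/2 < 1))
      filter_upwards [h12] with n hn
      by_contra hcon
      push_neg at hcon
      have h0 : dist (y n) p = 0 := le_antisymm hcon dist_nonneg
      rw [h0, zero_div] at hn
      linarith
    rcases eventually_atTop.1 hevpos with ⟨N, hN⟩
    refine ⟨fun n => dist (y (n + N)) p, fun n => dist (x (n + N)) p,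
      fun n => ⟨y (n + N), rfl⟩, fun n => hN (n + N) (by omega),
      almostDecreasing_shift hyad N, ?_, fun n => ⟨x (n + N), rfl⟩, ?_⟩
    · have hy0 : Tendsto (fun n => dist (y n) p) atTop (𝓝 0) := by
        have := hyone.mul hr0
        rw [mul_zero] at this
        refine this.congr' ?_
        filter_upwards [eventually_atTop.2 ⟨0, fun n _ => (hrpos n).ne'⟩] with n hn
        field_simp
      exact hy0.comp (tendsto_add_atTop_nat N)
    · have hdiv : Tendsto (fun n => (dist (x n) p / r n) / (dist (y n) p / r n))
          atTop (𝓝 (L / 1)) := hxlim.div hyone one_ne_zero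
      rw [div_one] at hdiv
      have hdiv2 : Tendsto (fun n => dist (x n) p / dist (y n) p) atTop (𝓝 L) := by
        refine hdiv.congr' ?_
        filter_upwards [hevpos] with n hn
        have h1 := hn.ne'
        have h2 := (hrpos n).ne'
        field_simp
      exact hdiv2.comp (tendsto_add_atTop_nat N)

lemma RstarX_top_RD (htop : RstarX p = ⊤) (c : ℝ) : ∃ L, c < L ∧ RD (SE p) L := by
  have h1 : ENNReal.ofReal c < RstarX p := htop ▸ ENNReal.ofReal_lt_top
  unfold RstarX at h1
  rcases lt_sSup_iff.1 h1 with ⟨e, heS, hce⟩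
  rcases mem_RstarX_RD heS with ⟨L, hL0, rfl, hRD⟩
  refine ⟨L, ?_, hRD⟩
  by_contra hcon
  push_neg at hcon
  exact absurd (ENNReal.ofReal_le_ofReal hcon) (not_le.2 hce)

end RDconv

section GapConstruct

variable {E : Set ℝ} {K : ℝ}

lemma gap_construct (hK1 : 1 ≤ K) (hbound : ∀ L, RD E L → L < K)
    (τ : ℕ → ℝ) (hτE : ∀ n, τ n ∈ E) (hτpos : ∀ n, 0 < τ n)
    (hτad : AlmostDecreasing τ) (hτ0 : Tendsto τ atTop (𝓝 0)) :
    ∃ (a b : ℕ → ℝ) (N : ℕ),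
      (∀ n, N ≤ n → IsGapComponent E (a n) (b n)) ∧
      (∀ n, N ≤ n → τ n ≤ a n ∧ a n ≤ K * τ n) ∧
      Tendsto (fun n => b n / τ n) atTop atTop ∧
      (∀ n, N ≤ n → a (n + 1) ≤ a n) := by
  classical
  set a : ℕ → ℝ := fun n => sSup (E ∩ Icc (τ n) (K * τ n)) with ha_def
  set b : ℕ → ℝ := fun n => sInf (E ∩ Ioi (a n)) with hb_def
  have hKpos : 0 < K := lt_of_lt_of_le one_pos hK1
  have hSne : ∀ n, (E ∩ Icc (τ n) (K * τ n)).Nonempty := fun n =>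
    ⟨τ n, hτE n, le_rfl, le_mul_of_one_le_left (hτpos n).le hK1⟩
  have hSbdd : ∀ n, BddAbove (E ∩ Icc (τ n) (K * τ n)) := fun n =>
    BddAbove.mono inter_subset_right bddAbove_Icc
  have ha1 : ∀ n, τ n ≤ a n := fun n =>
    le_csSup (hSbdd n) ⟨hτE n, le_rfl, le_mul_of_one_le_left (hτpos n).le hK1⟩
  have ha2 : ∀ n, a n ≤ K * τ n := fun n =>
    csSup_le (hSne n) fun x hx => hx.2.2
  have hapos : ∀ n, 0 < a n := fun n => lt_of_lt_of_le (hτpos n) (ha1 n)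
  have hgap1 : ∀ n, ∀ x ∈ E, a n < x → K * τ n < x := by
    intro n x hxE hax
    by_contra hcon
    push_neg at hcon
    have hx : x ∈ E ∩ Icc (τ n) (K * τ n) :=
      ⟨hxE, le_trans (ha1 n) hax.le, hcon⟩
    exact absurd (le_csSup (hSbdd n) hx) (not_le.2 hax)
  obtain ⟨N₀, hN₀⟩ := almostDecreasing_anti hτad
  have hNK : ∀ᶠ n in atTop, K * τ n < τ 0 := by
    have h1 : Tendsto (fun n => K * τ n) atTop (𝓝 (K * 0)) := hτ0.const_mul K
    rw [mul_zero] at h1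
    exact h1.eventually (eventually_lt_nhds (hτpos 0))
  rcases eventually_atTop.1 hNK with ⟨N₁, hN₁⟩
  have hTne : ∀ n, N₁ ≤ n → (E ∩ Ioi (a n)).Nonempty := fun n hn =>
    ⟨τ 0, hτE 0, lt_of_le_of_lt (ha2 n) (hN₁ n hn)⟩
  have hTbdd : ∀ n, BddBelow (E ∩ Ioi (a n)) := fun n =>
    ⟨a n, fun x hx => (le_of_lt hx.2)⟩
  have hbK : ∀ n, N₁ ≤ n → K * τ n ≤ b n := fun n hn =>
    le_csInf (hTne n hn) fun x hx => (hgap1 n x hx.1 hx.2).le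
  have hb1 : ∀ n, ∀ x ∈ E, a n < x → b n ≤ x := fun n x hxE hax =>
    csInf_le (hTbdd n) ⟨hxE, hax⟩
  have hIoo : ∀ n, Ioo (a n) (b n) ∩ E = ∅ := by
    intro n
    ext x
    simp only [mem_inter_iff, mem_Ioo, mem_empty_iff_false, iff_false, not_and]
    intro hx hxE
    exact absurd (hb1 n x hxE hx.1) (not_le.2 hx.2)
  -- the crucial divergence
  have hbt : Tendsto (fun n => b n / τ n) atTop atTop := by
    by_contra hcon
    rw [tendsto_atTop] at hcon
    push_neg at hcon
    obtain ⟨C, hC⟩ := hcon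
    have hfreq : ∃ᶠ n in atTop, b n / τ n < C := hC
    set C' := max C (K + 1) with hC'
    have hfreq2 : ∃ᶠ n in atTop, ∃ x, x ∈ E ∧ K * τ n < x ∧ x < C' * τ n := by
      refine ((hfreq.and_eventually (eventually_ge_atTop N₁)).mono ?_)
      rintro n ⟨hlt, hn⟩
      have hblt : b n < C' * τ n := by
        have h1 : b n < C * τ n := (div_lt_iff₀ (hτpos n)).1 hlt
        exact lt_of_lt_of_le h1 (mul_le_mul_of_nonneg_right (le_max_left _ _) (hτpos n).le)
      obtain ⟨x, hx, hxlt⟩ := exists_lt_of_csInf_lt (hTne n hn) hblt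
      exact ⟨x, hx.1, hgap1 n x hx.1 hx.2, hxlt⟩
    obtain ⟨φ, hφmono, hφ⟩ := extraction_of_frequently_atTop hfreq2
    choose sx hsxE hsx1 hsx2 using hφ
    have hρmem : ∀ k, sx k / τ (φ k) ∈ Icc K C' := by
      intro k
      constructor
      · exact le_of_lt ((lt_div_iff₀ (hτpos (φ k))).2 (by linarith [hsx1 k]))
      · exact le_of_lt ((div_lt_iff₀ (hτpos (φ k))).2 (by linarith [hsx2 k]))
    obtain ⟨L, hLmem, ψ, hψmono, hψlim⟩ :=
      tendsto_subseq_of_bounded (Metric.isBounded_Icc K C') hρmem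
    rw [(isClosed_Icc).closure_eq] at hLmem
    have hRD : RD E L := by
      refine ⟨τ ∘ (φ ∘ ψ), sx ∘ ψ, fun n => hτE _, fun n => hτpos _,
        almostDecreasing_comp hτad (hφmono.comp hψmono), 
        hτ0.comp ((hφmono.comp hψmono).tendsto_atTop), fun n => hsxE _, hψlim⟩
    exact absurd (hbound L hRD) (not_lt.2 hLmem.1)
  -- gap components
  have hN₂ : ∀ᶠ n in atTop, (K + 1) * τ n < b n := by
    have := hbt.eventually (eventually_ge_atTop (K + 2))
    filter_upwards [this] with n hn
    have h1 : (K + 2) * τ n ≤ b n := by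
      rw [le_div_iff₀ (hτpos n)] at hn
      linarith
    nlinarith [hτpos n]
  rcases eventually_atTop.1 hN₂ with ⟨N₂, hN₂'⟩
  refine ⟨a, b, max (max N₁ N₂) N₀, ?_, ?_, hbt, ?_⟩
  · intro n hn
    have hn₁ : N₁ ≤ n := le_trans (le_trans (le_max_left _ _) (le_max_left _ _)) hn
    have hn₂ : N₂ ≤ n := le_trans (le_trans (le_max_right _ _) (le_max_left _ _)) hn
    have hab : a n < b n :=
      lt_of_le_of_lt (le_trans (ha2 n) (by nlinarith [hτpos n])) (hN₂' n hn₂)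
    refine ⟨(hτpos n).le.trans (ha1 n), hab, hIoo n, ?_⟩
    intro a' b' ha'0 ha'le hble hempty
    have haa : a' = a n := by
      by_contra hne
      have ha'lt : a' < a n := lt_of_le_of_ne ha'le hne
      obtain ⟨x, hx, hxgt⟩ := exists_lt_of_lt_csSup (hSne n) ha'lt
      have hxle : x ≤ a n := le_csSup (hSbdd n) hx
      have : x ∈ Ioo a' b' ∩ E := ⟨⟨hxgt, lt_of_le_of_lt hxle (lt_of_lt_of_le hab hble)⟩, hx.1⟩
      simp [hempty] at this
    refine ⟨haa, ?_⟩
    by_contra hne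
    have hblt : b n < b' := lt_of_le_of_ne hble (fun h => hne h.symm)
    obtain ⟨y, hy, hylt⟩ := exists_lt_of_csInf_lt (hTne n hn₁) hblt
    have : y ∈ Ioo a' b' ∩ E := ⟨⟨haa ▸ hy.2, hylt⟩, hy.1⟩
    simp [hempty] at this
  · intro n hn
    exact ⟨ha1 n, ha2 n⟩
  · intro n hn
    have hn₀ : N₀ ≤ n := le_trans (le_max_right _ _) hn
    have hn₁ : N₁ ≤ n := le_trans (le_trans (le_max_left _ _) (le_max_left _ _)) hn
    have hn₂ : N₂ ≤ n := le_trans (le_trans (le_max_right _ _) (le_max_left _ _)) hn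
    by_contra hcon
    push_neg at hcon
    obtain ⟨x, hx, hxgt⟩ := exists_lt_of_lt_csSup (hSne (n+1)) hcon
    have hτle : τ (n + 1) ≤ τ n := hN₀ hn₀ (Nat.le_succ n)
    have hxb : x < b n := by
      have h1 : x ≤ K * τ (n+1) := hx.2.2
      have h2 : K * τ (n+1) ≤ K * τ n := mul_le_mul_of_nonneg_left hτle hKpos.le
      have h3 : K * τ n < b n := by nlinarith [hτpos n, hN₂' n hn₂]
      linarith
    have : x ∈ Ioo (a n) (b n) ∩ E := ⟨⟨hxgt, hxb⟩, hx.1⟩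
    simp [hIoo n] at this

end GapConstruct

section Patch

lemma memIE_patch {E : Set ℝ} {a b : ℕ → ℝ} {N : ℕ}
    (hgap : ∀ n, N ≤ n → IsGapComponent E (a n) (b n))
    (had : ∀ n, N ≤ n → a (n + 1) ≤ a n)
    (ha0 : Tendsto a atTop (𝓝 0))
    (hratio : Tendsto (fun n => a n / b n) atTop (𝓝 0)) :
    MemIE E (fun n => a (max n N)) (fun n => b (max n N)) := by
  have hbpos : ∀ n, 0 < b (max n N) := fun n =>
    lt_of_le_of_lt (hgap _ (le_max_right n N)).1 (hgap _ (le_max_right n N)).2.1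
  have heq : ∀ᶠ n in atTop, a (max n N) = a n := by
    filter_upwards [eventually_ge_atTop N] with n hn
    rw [max_eq_left hn]
  have heq2 : ∀ᶠ n in atTop, a (max n N) / b (max n N) = a n / b n := by
    filter_upwards [eventually_ge_atTop N] with n hn
    rw [max_eq_left hn]
  refine ⟨fun n => hgap _ (le_max_right n N), ?_, ?_, ?_⟩
  · filter_upwards [eventually_ge_atTop N] with n hn
    show a (max (n+1) N) ≤ a (max n N)
    rw [max_eq_left hn, max_eq_left (by omega)]
    exact had n hn
  · exact Tendsto.congr' (heq.mono fun n h => h.symm) ha0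
  · refine ratio_tendsto_one hbpos ?_
    exact Tendsto.congr' (heq2.mono fun n h => h.symm) hratio

lemma exists_ratio_bound (g h : ℕ → ℝ) (N : ℕ) (hh : ∀ n, n < N → 0 < h n)
    (hg : ∀ n, n < N → 0 < g n) : ∃ c, 0 < c ∧ ∀ n, n < N → g n < c * h n := by
  induction N with
  | zero => exact ⟨1, one_pos, fun n hn => absurd hn (by omega)⟩
  | succ M ih =>
    obtain ⟨c, hc, hlt⟩ := ih (fun n hn => hh n (by omega)) (fun n hn => hg n (by omega))
    have hhM := hh M (by omega)
    have hgM := hg M (by omega)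
    refine ⟨max c (g M / h M + 1), lt_of_lt_of_le hc (le_max_left _ _), ?_⟩
    intro n hn
    rcases Nat.lt_or_ge n M with h1 | h1
    · exact lt_of_lt_of_le (hlt n h1)
        (mul_le_mul_of_nonneg_right (le_max_left _ _) (hh n (by omega)).le)
    · have hnM : n = M := by omega
      subst hnM
      have h2 : g n < (g n / h n + 1) * h n := by
        have : (g n / h n) * h n = g n := div_mul_cancel₀ _ hhM.ne'
        nlinarith
      exact lt_of_lt_of_le h2 (mul_le_mul_of_nonneg_right (le_max_right _ _) hhM.le)

end Patch

section CSPforward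

variable {X : Type*} [MetricSpace X] {p : X}

lemma SE_nonneg {e : ℝ} (he : e ∈ SE p) : 0 ≤ e := by
  obtain ⟨x, hx⟩ := he
  rw [← hx]; exact dist_nonneg

lemma csp_of_fin (hfin : RstarX p < ⊤) : CSP (SE p) := by
  intro t ht
  obtain ⟨had, hmem, ht0⟩ := ht
  have htpos : ∀ n, 0 < t n := fun n =>
    lt_of_le_of_ne (SE_nonneg (hmem n).1) (fun h => (hmem n).2 h.symm)
  set K := (RstarX p).toReal + 1 with hK
  have hK1 : 1 ≤ K := by
    have : (0:ℝ) ≤ (RstarX p).toReal := ENNReal.toReal_nonneg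
    linarith
  obtain ⟨a, b, N, hgap, hbounds, hbt, hadN⟩ :=
    gap_construct hK1 (fun L hL => RD_lt_K hfin hL) t (fun n => (hmem n).1) htpos had ht0
  have hKpos : (0:ℝ) < K := lt_of_lt_of_le one_pos hK1
  have ha0 : Tendsto a atTop (𝓝 0) := by
    have hup : Tendsto (fun n => K * t n) atTop (𝓝 0) := by
      have := ht0.const_mul K; rwa [mul_zero] at this
    refine tendsto_of_tendsto_of_tendsto_of_le_of_le' ht0 hup ?_ ?_
    · filter_upwards [eventually_ge_atTop N] with n hn; exact (hbounds n hn).1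
    · filter_upwards [eventually_ge_atTop N] with n hn; exact (hbounds n hn).2
  have hratio : Tendsto (fun n => a n / b n) atTop (𝓝 0) := by
    have hinv : Tendsto (fun n => K * (b n / t n)⁻¹) atTop (𝓝 0) := by
      have := hbt.inv_tendsto_atTop.const_mul K
      rwa [mul_zero] at this
    refine tendsto_of_tendsto_of_tendsto_of_le_of_le' tendsto_const_nhds hinv ?_ ?_
    · filter_upwards [eventually_ge_atTop N] with n hn
      have hb := lt_of_le_of_lt (hgap n hn).1 (hgap n hn).2.1
      exact div_nonneg (le_trans (htpos n).le (hbounds n hn).1) hb.le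
    · filter_upwards [eventually_ge_atTop N] with n hn
      have hb := lt_of_le_of_lt (hgap n hn).1 (hgap n hn).2.1
      rw [inv_div]
      have h1 : a n / b n ≤ (K * t n) / b n := by
        gcongr
        exact (hbounds n hn).2
      calc a n / b n ≤ (K * t n) / b n := h1
        _ = K * (t n / b n) := by ring
  -- assemble MemIE via patching
  refine ⟨fun n => a (max n N), fun n => b (max n N),
    memIE_patch hgap hadN ha0 hratio, ?_⟩
  -- Asymp constants
  have haN : 0 < a N := lt_of_lt_of_le (htpos N) (hbounds N le_rfl).1
  obtain ⟨c₂', hc₂'pos, hc₂'⟩ := exists_ratio_bound (fun _ => a N) t N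
    (fun n _ => htpos n) (fun n _ => haN)
  obtain ⟨c', hc'pos, hc'⟩ := exists_ratio_bound t (fun _ => a N) N
    (fun n _ => haN) (fun n _ => htpos n)
  refine ⟨min (1/2) (1/c'), max (K + 1) c₂', lt_min (by norm_num) (by positivity),
    lt_of_lt_of_le (by linarith : (0:ℝ) < K + 1) (le_max_left _ _), ?_⟩
  intro n
  beta_reduce
  rcases Nat.lt_or_ge n N with hn | hn
  · rw [max_eq_right hn.le]
    constructor
    · have h1 : t n < c' * a N := hc' n hn
      have h2 : (1/c') * t n < a N := by
        rw [one_div, inv_mul_lt_iff₀ hc'pos]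
        exact h1
      calc min (1/2) (1/c') * t n ≤ (1/c') * t n :=
            mul_le_mul_of_nonneg_right (min_le_right _ _) (htpos n).le
        _ < a N := h2
    · calc a N < c₂' * t n := hc₂' n hn
        _ ≤ max (K + 1) c₂' * t n :=
            mul_le_mul_of_nonneg_right (le_max_right _ _) (htpos n).le
  · rw [max_eq_left hn]
    constructor
    · calc min (1/2) (1/c') * t n ≤ (1/2) * t n :=
            mul_le_mul_of_nonneg_right (min_le_left _ _) (htpos n).le
        _ < t n := by linarith [htpos n]
        _ ≤ a n := (hbounds n hn).1
    · calc a n ≤ K * t n := (hbounds n hn).2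
        _ < (K + 1) * t n := by nlinarith [htpos n]
        _ ≤ max (K + 1) c₂' * t n :=
            mul_le_mul_of_nonneg_right (le_max_left _ _) (htpos n).le

end CSPforward

section PartB

variable {X : Type*} [MetricSpace X] {p : X}

lemma not_csp_of_top (htop : RstarX p = ⊤) : ¬ CSP (SE p) := by
  intro hCSP
  have H : ∀ k : ℕ, ∃ L, (k : ℝ) + 1 < L ∧ RD (SE p) L := fun k =>
    RstarX_top_RD htop ((k : ℝ) + 1)
  choose L hLgt hRD using H
  have key : ∀ k : ℕ, ∀ ε : ℝ, ∃ t u : ℝ, 0 < ε →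
      t ∈ SE p ∧ 0 < t ∧ t < ε ∧ u ∈ SE p ∧ (L k - 1) * t < u ∧ u < (L k + 1) * t := by
    intro k ε
    rcases le_or_gt ε 0 with hε | hε
    · exact ⟨0, 0, fun h => absurd h (not_lt.2 hε)⟩
    · obtain ⟨τ, s, hτE, hτpos, hτad, hτ0, hsE, hlim⟩ := hRD k
      have h1 : ∀ᶠ n in atTop, τ n < ε := hτ0.eventually (eventually_lt_nhds hε)
      have h2 : ∀ᶠ n in atTop, s n / τ n ∈ Ioo (L k - 1) (L k + 1) :=
        hlim.eventually (Ioo_mem_nhds (by linarith) (by linarith))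
      rcases (h1.and h2).exists with ⟨n, hn1, hn2⟩
      refine ⟨τ n, s n, fun _ => ⟨hτE n, hτpos n, hn1, hsE n, ?_, ?_⟩⟩
      · exact (lt_div_iff₀ (hτpos n)).1 hn2.1
      · exact (div_lt_iff₀ (hτpos n)).1 hn2.2
  choose tP uP hP using key
  set kf : ℕ → ℕ := fun j => (Nat.unpair j).1 with hkf
  set τ : ℕ → ℝ := fun j =>
    Nat.rec (tP (kf 0) 1) (fun j ih => tP (kf (j+1)) (min ih (1/(j+2)))) j with hτdef
  set εf : ℕ → ℝ := fun j =>
    Nat.rec 1 (fun j _ => min (τ j) (1/(j+2))) j with hεdef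
  have hτeq : ∀ j, τ j = tP (kf j) (εf j) := by
    intro j
    cases j with
    | zero => rfl
    | succ i => rfl
  set u : ℕ → ℝ := fun j => uP (kf j) (εf j) with hu_def
  have hεpos : ∀ j, 0 < εf j ∧ 0 < τ j := by
    intro j
    induction j with
    | zero =>
      refine ⟨one_pos, ?_⟩
      exact (hP (kf 0) 1 one_pos).2.1
    | succ i ih =>
      have hε : 0 < εf (i+1) := lt_min ih.2 (by positivity)
      refine ⟨hε, ?_⟩
      have := (hP (kf (i+1)) (εf (i+1)) hε).2.1
      rwa [← hτeq (i+1)] at this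
  have hprops : ∀ j, τ j ∈ SE p ∧ 0 < τ j ∧ τ j < εf j ∧ u j ∈ SE p ∧
      (L (kf j) - 1) * τ j < u j ∧ u j < (L (kf j) + 1) * τ j := by
    intro j
    have := hP (kf j) (εf j) (hεpos j).1
    rw [← hτeq j] at this
    exact this
  have hdec : ∀ j, τ (j+1) < τ j := by
    intro j
    have h1 := (hprops (j+1)).2.2.1
    have h2 : εf (j+1) ≤ τ j := min_le_left _ _
    linarith
  have hsmall : ∀ j, τ (j+1) < 1/(j+2) := by
    intro j
    have h1 := (hprops (j+1)).2.2.1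
    have h2 : εf (j+1) ≤ 1/(j+2) := min_le_right _ _
    linarith
  have hτ0 : Tendsto τ atTop (𝓝 0) := by
    have hup : Tendsto (fun j : ℕ => 1 / ((j : ℝ) + 1)) atTop (𝓝 0) :=
      tendsto_one_div_add_atTop_nhds_zero_nat
    refine tendsto_of_tendsto_of_tendsto_of_le_of_le' tendsto_const_nhds hup ?_ ?_
    · exact Eventually.of_forall fun j => (hprops j).2.1.le
    · refine eventually_atTop.2 ⟨1, fun j hj => ?_⟩
      obtain ⟨i, rfl⟩ : ∃ i, j = i + 1 := ⟨j - 1, by omega⟩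
      have := hsmall i
      have heq : ((i:ℝ) + 1 + 1) = ((i:ℝ) + 2) := by ring
      rw [Nat.cast_add, Nat.cast_one, heq]
      push_cast at this ⊢
      linarith
  have hmem : MemE0d (SE p) τ := by
    refine ⟨almostDecreasing_of_strict hdec, fun j => ⟨(hprops j).1, ?_⟩, hτ0⟩
    simp only [mem_singleton_iff]
    exact (hprops j).2.1.ne'
  obtain ⟨a, b, hIE, c₁, c₂, hc₁, hc₂, hc⟩ := hCSP τ hmem
  have hbig : Tendsto (fun j => b j / τ j) atTop atTop := by
    have hba : Tendsto (fun j => a j / b j) atTop (𝓝 0) := memIE_div_tendsto hIE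
    rw [tendsto_atTop]
    intro C
    have hev := hba.eventually (eventually_lt_nhds
      (show (0:ℝ) < c₁ / (max C 1) by positivity))
    filter_upwards [hev] with j hj
    have hbpos := memIE_bpos hIE j
    have hτpos := (hprops j).2.1
    have hapos : 0 < a j := lt_trans (by positivity) (hc j).1
    rw [div_lt_div_iff₀ hbpos (by positivity : (0:ℝ) < max C 1)] at hj
    have hτlt : τ j < a j / c₁ := (lt_div_iff₀' hc₁).2 (hc j).1
    have h2 : b j / (a j / c₁) < b j / τ j :=
      div_lt_div_of_pos_left hbpos hτpos hτlt
    have h3 : b j / (a j / c₁) = c₁ * b j / a j := by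
      field_simp
    have h4 : max C 1 < c₁ * b j / a j := (lt_div_iff₀ hapos).2 (by linarith)
    have : C < b j / τ j := by
      calc C ≤ max C 1 := le_max_left _ _
        _ < c₁ * b j / a j := h4
        _ = b j / (a j / c₁) := h3.symm
        _ < b j / τ j := h2
    exact this.le
  set k := ⌈c₂⌉₊ with hk
  have hLk : c₂ + 1 < L k := by
    have h1 : c₂ ≤ (k : ℝ) := Nat.le_ceil c₂
    have h2 := hLgt k
    linarith
  have hfreq : ∃ᶠ j in atTop, kf j = k := by
    rw [frequently_atTop]
    intro N
    exact ⟨Nat.pair k N, Nat.right_le_pair k N, by simp [hkf, Nat.unpair_pair]⟩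
  have hev2 := hbig.eventually (eventually_gt_atTop (L k + 1))
  rcases (hfreq.and_eventually hev2).exists with ⟨j, hjk, hjgt⟩
  have hτpos := (hprops j).2.1
  have huE := (hprops j).2.2.2.1
  have hul : (L k - 1) * τ j < u j := by
    have := (hprops j).2.2.2.2.1
    rwa [hjk] at this
  have hur : u j < (L k + 1) * τ j := by
    have := (hprops j).2.2.2.2.2
    rwa [hjk] at this
  have hugt : a j < u j := by
    have h1 : a j < c₂ * τ j := (hc j).2
    have h2 : c₂ * τ j < (L k - 1) * τ j := by nlinarith
    linarith
  have hub : b j ≤ u j := by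
    rcases gap_notmem (hIE.1 j) huE with h | h
    · linarith
    · exact h
  have : b j / τ j < L k + 1 := by
    have h1 : b j / τ j ≤ u j / τ j := by gcongr
    have h2 : u j / τ j < L k + 1 := by rw [div_lt_iff₀ hτpos]; linarith
    linarith
  linarith

end PartB

section Helpers2

lemma limsup_comp_le (q : ℕ → ℝ≥0∞) {g : ℕ → ℕ} (hg : Tendsto g atTop atTop) :
    limsup (fun n => q (g n)) atTop ≤ limsup q atTop := by
  rw [limsup_eq, limsup_eq]
  apply sInf_le_sInf
  intro x hx
  exact hg.eventually hx

lemma tendsto_findex {l : ℕ → ℝ} (hl : ∀ w, 0 < l w) {f : ℕ → ℕ}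
    (hto : Tendsto (fun n => l (f n)) atTop (𝓝 0)) : Tendsto f atTop atTop := by
  rw [tendsto_atTop]
  intro W
  have hne : (Finset.range (W + 1)).Nonempty := ⟨0, by simp⟩
  have hpos : 0 < (Finset.range (W + 1)).inf' hne l := by
    rw [Finset.lt_inf'_iff]
    exact fun w _ => hl w
  filter_upwards [hto.eventually (eventually_lt_nhds hpos)] with n hn
  by_contra hcon
  push_neg at hcon
  have hmem : f n ∈ Finset.range (W + 1) := by simp; omega
  have := Finset.inf'_le l hmem
  linarith

lemma exists_strictmono_subseq {t : ℕ → ℝ} (h0 : Tendsto t atTop (𝓝 0))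
    (hpos : ∀ n, 0 < t n) :
    ∃ φ : ℕ → ℕ, StrictMono φ ∧ ∀ k, t (φ (k + 1)) < t (φ k) := by
  have key : ∀ n : ℕ, ∃ m, n < m ∧ t m < t n := by
    intro n
    have h1 := h0.eventually (eventually_lt_nhds (hpos n))
    rcases ((eventually_gt_atTop n).and h1).exists with ⟨m, hm1, hm2⟩
    exact ⟨m, hm1, hm2⟩
  choose nxt h1 h2 using key
  exact ⟨fun k => Nat.rec 0 (fun _ ih => nxt ih) k,
    strictMono_nat_of_lt_succ (fun k => h1 _), fun k => h2 _⟩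

lemma extract_freq {P : ℕ → ℕ → Prop} (h : ∀ j, ∃ᶠ w in atTop, P j w) :
    ∃ φ : ℕ → ℕ, StrictMono φ ∧ ∀ j, P j (φ j) := by
  have key : ∀ j n, ∃ w, n < w ∧ P j w := by
    intro j n
    rcases ((eventually_gt_atTop n).and_frequently (h j)).exists with ⟨w, hw1, hw2⟩
    exact ⟨w, hw1, hw2⟩
  choose nxt h1 h2 using key
  refine ⟨fun j => Nat.rec (nxt 0 0) (fun j ih => nxt (j + 1) ih) j,
    strictMono_nat_of_lt_succ (fun k => h1 _ _), ?_⟩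
  intro j
  cases j with
  | zero => exact h2 0 0
  | succ i => exact h2 (i + 1) _

lemma tendsto_half : Tendsto (fun q : ℕ => q / 2) atTop atTop := by
  rw [tendsto_atTop]
  intro M
  filter_upwards [eventually_ge_atTop (2 * M)] with q hq
  omega

end Helpers2

section GapPackage

variable {X : Type*} [MetricSpace X] {p : X}

lemma gap_package (hfin : RstarX p < ⊤)
    (τ : ℕ → ℝ) (hτE : ∀ n, τ n ∈ SE p) (hτpos : ∀ n, 0 < τ n)
    (hτad : AlmostDecreasing τ) (hτ0 : Tendsto τ atTop (𝓝 0)) :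
    ∃ (a b : ℕ → ℝ) (N : ℕ),
      (∀ n, N ≤ n → IsGapComponent (SE p) (a n) (b n)) ∧
      (∀ n, N ≤ n → τ n ≤ a n ∧ a n ≤ ((RstarX p).toReal + 1) * τ n) ∧
      Tendsto (fun n => b n / τ n) atTop atTop ∧
      MemIE (SE p) (fun n => a (max n N)) (fun n => b (max n N)) := by
  set K := (RstarX p).toReal + 1 with hK
  have hK1 : 1 ≤ K := by
    have : (0:ℝ) ≤ (RstarX p).toReal := ENNReal.toReal_nonneg
    linarith
  obtain ⟨a, b, N, hgap, hbounds, hbt, hadN⟩ :=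
    gap_construct hK1 (fun L hL => RD_lt_K hfin hL) τ hτE hτpos hτad hτ0
  have hKpos : (0:ℝ) < K := lt_of_lt_of_le one_pos hK1
  have ha0 : Tendsto a atTop (𝓝 0) := by
    have hup : Tendsto (fun n => K * τ n) atTop (𝓝 0) := by
      have := hτ0.const_mul K; rwa [mul_zero] at this
    refine tendsto_of_tendsto_of_tendsto_of_le_of_le' hτ0 hup ?_ ?_
    · filter_upwards [eventually_ge_atTop N] with n hn; exact (hbounds n hn).1
    · filter_upwards [eventually_ge_atTop N] with n hn; exact (hbounds n hn).2
  have hratio : Tendsto (fun n => a n / b n) atTop (𝓝 0) := by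
    have hinv : Tendsto (fun n => K * (b n / τ n)⁻¹) atTop (𝓝 0) := by
      have := hbt.inv_tendsto_atTop.const_mul K
      rwa [mul_zero] at this
    refine tendsto_of_tendsto_of_tendsto_of_le_of_le' tendsto_const_nhds hinv ?_ ?_
    · filter_upwards [eventually_ge_atTop N] with n hn
      have hb := lt_of_le_of_lt (hgap n hn).1 (hgap n hn).2.1
      exact div_nonneg (le_trans (hτpos n).le (hbounds n hn).1) hb.le
    · filter_upwards [eventually_ge_atTop N] with n hn
      have hb := lt_of_le_of_lt (hgap n hn).1 (hgap n hn).2.1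
      rw [inv_div]
      have h1 : a n / b n ≤ (K * τ n) / b n := by
        gcongr
        exact (hbounds n hn).2
      calc a n / b n ≤ (K * τ n) / b n := h1
        _ = K * (τ n / b n) := by ring
  exact ⟨a, b, N, hgap, hbounds, hbt, memIE_patch hgap hadN ha0 hratio⟩

end GapPackage

section Universal

variable {E : Set ℝ} {l m : ℕ → ℝ}

/-- Structure facts about a universal element. -/
lemma univ_nxt (hgap : ∀ w, IsGapComponent E (l w) (m w))
    (hlpos : ∀ w, 0 < l w) (hl0 : Tendsto l atTop (𝓝 0))
    {N₀ : ℕ} (hN₀ : ∀ ⦃i j : ℕ⦄, N₀ ≤ i → i ≤ j → l j ≤ l i) :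
    ∃ nxt : ℕ → ℕ, (∀ w, w + 1 ≤ nxt w) ∧ (∀ w, l (nxt w) < l w) ∧
      (∀ w, N₀ ≤ w → ∀ u, w ≤ u → u < nxt w → l u = l w) := by
  have hex : ∀ w, ∃ v, l (w + 1 + v) < l w := by
    intro w
    have h1 := hl0.eventually (eventually_lt_nhds (hlpos w))
    rcases eventually_atTop.1 h1 with ⟨M, hM⟩
    exact ⟨M, hM _ (by omega)⟩
  refine ⟨fun w => w + 1 + Nat.find (hex w), fun w => ?_,
    fun w => Nat.find_spec (hex w), ?_⟩
  · show w + 1 ≤ w + 1 + Nat.find (hex w)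
    omega
  intro w hw u hu1 hu2
  change u < w + 1 + Nat.find (hex w) at hu2
  rcases Nat.eq_or_lt_of_le hu1 with heq | hlt
  · rw [← heq]
  · have hle : l u ≤ l w := hN₀ hw hu1
    obtain ⟨v, hv⟩ : ∃ v, u = w + 1 + v := ⟨u - (w + 1), by omega⟩
    have hvlt : v < Nat.find (hex w) := by omega
    have := Nat.find_min (hex w) hvlt
    rw [← hv] at this
    linarith [not_lt.1 this]

end Universal

section Upper

variable {X : Type*} [MetricSpace X] {p : X}

lemma hacc_of_closure (hacc : p ∈ closure ({p}ᶜ : Set X)) :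
    ∀ ε : ℝ, 0 < ε → ∃ e ∈ SE p, 0 < e ∧ e < ε := by
  intro ε hε
  rcases Metric.mem_closure_iff.1 hacc ε hε with ⟨q, hq, hd⟩
  refine ⟨dist q p, ⟨q, rfl⟩, dist_pos.2 (by simpa using hq), by rwa [dist_comm] at hd⟩

lemma upper_bound (hfin : RstarX p < ⊤) (hacc : p ∈ closure ({p}ᶜ : Set X))
    {l m : ℕ → ℝ} (hU : IsUniversal (SE p) l m) : RstarX p ≤ Mlim l m := by
  have haccE := hacc_of_closure hacc
  obtain ⟨hIE, hUdef⟩ := hU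
  have hlgap : ∀ w, IsGapComponent (SE p) (l w) (m w) := hIE.1
  have hlpos : ∀ w, 0 < l w := fun w => gap_pos haccE (hlgap w)
  have hmpos : ∀ w, 0 < m w := fun w => lt_trans (hlpos w) (hlgap w).2.1
  have hl0 : Tendsto l atTop (𝓝 0) := hIE.2.2.1
  have hlm0 : Tendsto (fun w => l w / m w) atTop (𝓝 0) := memIE_div_tendsto hIE
  obtain ⟨N₀, hN₀⟩ := almostDecreasing_anti hIE.2.1
  obtain ⟨nxt, hnxt1, hnxt2, hnxt3⟩ := univ_nxt hlgap hlpos hl0 hN₀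
  set K := (RstarX p).toReal + 1 with hKdef
  have hK0 : (0:ℝ) ≤ (RstarX p).toReal := ENNReal.toReal_nonneg
  have hKpos : (0:ℝ) < K := by rw [hKdef]; linarith
  conv_lhs => rw [RstarX]
  apply sSup_le
  intro c hc
  obtain ⟨Lv, hLv0, rfl, hRD⟩ := mem_RstarX_RD hc
  obtain ⟨τ, s, hτE, hτpos, hτad, hτ0, hsE, hlim⟩ := hRD
  obtain ⟨a, b, N, hgap, hbounds, hbt, hIEp⟩ := gap_package hfin τ hτE hτpos hτad hτ0
  have ha0 : Tendsto a atTop (𝓝 0) := by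
    have hup : Tendsto (fun n => K * τ n) atTop (𝓝 0) := by
      have := hτ0.const_mul K; rwa [mul_zero] at this
    refine tendsto_of_tendsto_of_tendsto_of_le_of_le' hτ0 hup ?_ ?_
    · filter_upwards [eventually_ge_atTop N] with n hn; exact (hbounds n hn).1
    · filter_upwards [eventually_ge_atTop N] with n hn; exact (hbounds n hn).2
  obtain ⟨N₁, f, hf⟩ := hUdef _ _ hIEp
  have hfa : ∀ n, max N N₁ ≤ n → a n = l (f n) := by
    intro n hn
    have h1 : a (max n N) = l (f n) := hf n (le_trans (le_max_right _ _) hn)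
    rwa [max_eq_left (le_trans (le_max_left _ _) hn)] at h1
  have hfb : ∀ n, max N N₁ ≤ n → b n = m (f n) := by
    intro n hn
    have hg1 := hgap n (le_trans (le_max_left _ _) hn)
    have hg2 := hlgap (f n)
    rw [← hfa n hn] at hg2
    exact gap_unique_right hg1 hg2
  have hftop : Tendsto f atTop atTop := by
    apply tendsto_findex hlpos
    refine ha0.congr' ?_
    filter_upwards [eventually_ge_atTop (max N N₁)] with n hn
    exact hfa n hn
  have hsa : ∀ᶠ n in atTop, s n ≤ a n := by
    have h1 := hlim.eventually (eventually_lt_nhds (show Lv < Lv + 1 by linarith))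
    have h2 := hbt.eventually (eventually_gt_atTop (Lv + 1))
    filter_upwards [h1, h2, eventually_ge_atTop (max N N₁)] with n e1 e2 e3
    have hsb : s n < b n := by
      have h3 : s n / τ n < b n / τ n := lt_trans e1 e2
      have h4 := mul_lt_mul_of_pos_right h3 (hτpos n)
      rwa [div_mul_cancel₀ _ (hτpos n).ne', div_mul_cancel₀ _ (hτpos n).ne'] at h4
    rcases gap_notmem (hgap n (le_trans (le_max_left _ _) e3)) (hsE n) with h | h
    · exact h
    · linarith
  have hmle : ∀ᶠ n in atTop, m (nxt (f n)) ≤ τ n ∧ l (nxt (f n) - 1) = l (f n) ∧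
      (nxt (f n) - 1) + 1 = nxt (f n) := by
    have e1 : ∀ᶠ n in atTop, N₀ ≤ f n := hftop.eventually (eventually_ge_atTop N₀)
    have e2 : ∀ᶠ n in atTop, l (nxt (f n)) / m (nxt (f n)) < 1 / K := by
      have hnt : Tendsto (fun n => nxt (f n)) atTop atTop :=
        tendsto_atTop_mono (fun n => le_trans (Nat.le_succ _) (hnxt1 (f n))) hftop
      exact hnt.eventually (hlm0.eventually
        (eventually_lt_nhds (by positivity : (0:ℝ) < 1 / K)))
    filter_upwards [e1, e2, eventually_ge_atTop (max N N₁)] with n he1 he2 he3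
    have hidx1 : f n ≤ nxt (f n) - 1 := by have := hnxt1 (f n); omega
    have hidx2 : nxt (f n) - 1 < nxt (f n) := by have := hnxt1 (f n); omega
    have hidx3 : (nxt (f n) - 1) + 1 = nxt (f n) := by have := hnxt1 (f n); omega
    refine ⟨?_, hnxt3 (f n) he1 _ hidx1 hidx2, hidx3⟩
    by_contra hcon
    push_neg at hcon
    have hτl : τ n ≤ l (nxt (f n)) := by
      rcases gap_notmem (hlgap (nxt (f n))) (hτE n) with h | h
      · exact h
      · linarith
    have hml : m (nxt (f n)) ≤ l (f n) :=
      gap_disjoint (hlgap (f n)) (hlgap (nxt (f n))) (hnxt2 (f n))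
    have h2 : l (f n) ≤ K * τ n := by
      rw [← hfa n he3]
      exact (hbounds n (le_trans (le_max_left _ _) he3)).2
    have h3 : 1 / K ≤ l (nxt (f n)) / m (nxt (f n)) := by
      rw [div_le_div_iff₀ hKpos (hmpos _)]
      have h4 := mul_le_mul_of_nonneg_left hτl hKpos.le
      linarith
    linarith
  have hofl : Tendsto (fun n => ENNReal.ofReal (s n / τ n)) atTop
      (𝓝 (ENNReal.ofReal Lv)) := (ENNReal.continuous_ofReal.tendsto Lv).comp hlim
  have heq1 : ENNReal.ofReal Lv = limsup (fun n => ENNReal.ofReal (s n / τ n)) atTop :=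
    hofl.limsup_eq.symm
  have hgtop : Tendsto (fun n => nxt (f n) - 1) atTop atTop := by
    apply tendsto_atTop_mono (fun n => ?_) hftop
    have := hnxt1 (f n); omega
  have hle2 : limsup (fun n => ENNReal.ofReal (s n / τ n)) atTop ≤
      limsup (fun n => ENNReal.ofReal (l (nxt (f n) - 1) / m ((nxt (f n) - 1) + 1))) atTop := by
    refine limsup_le_limsup ?_ isCobounded_le_of_bot isBounded_le_of_top
    filter_upwards [hsa, hmle, eventually_ge_atTop (max N N₁)] with n h1 h2 h3
    apply ENNReal.ofReal_le_ofReal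
    rw [h2.2.2, h2.2.1]
    have han : (0:ℝ) ≤ a n :=
      le_trans (hτpos n).le (hbounds n (le_trans (le_max_left _ _) h3)).1
    have hsτ : s n / τ n ≤ a n / τ n := (div_le_div_iff_of_pos_right (hτpos n)).2 h1
    have hma : a n / τ n ≤ a n / m (nxt (f n)) :=
      div_le_div_of_nonneg_left han (hmpos _) h2.1
    rw [← hfa n h3]
    linarith
  have hle3 : limsup (fun n => ENNReal.ofReal (l (nxt (f n) - 1) / m ((nxt (f n) - 1) + 1)))
      atTop ≤ Mlim l m :=
    limsup_comp_le (fun w => ENNReal.ofReal (l w / m (w + 1))) hgtop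
  rw [heq1]
  exact le_trans hle2 hle3

end Upper

section LowerFin

lemma tendsto_of_abs_lt {u : ℕ → ℝ} {c : ℝ} (h : ∀ j, |u j - c| < 1 / ((j:ℝ) + 1)) :
    Tendsto u atTop (𝓝 c) := by
  rw [tendsto_iff_dist_tendsto_zero]
  have hup : Tendsto (fun j : ℕ => 1 / ((j : ℝ) + 1)) atTop (𝓝 0) :=
    tendsto_one_div_add_atTop_nhds_zero_nat
  refine tendsto_of_tendsto_of_tendsto_of_le_of_le' tendsto_const_nhds hup ?_ ?_
  · exact Eventually.of_forall fun j => dist_nonneg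
  · exact Eventually.of_forall fun j => by
      rw [Real.dist_eq]; exact (h j).le

variable {X : Type*} [MetricSpace X] {p : X}

lemma lower_bound_fin (hacc : p ∈ closure ({p}ᶜ : Set X))
    {l m : ℕ → ℝ} (hU : IsUniversal (SE p) l m) (hne : Mlim l m ≠ ⊤) :
    Mlim l m ≤ RstarX p := by
  have haccE := hacc_of_closure hacc
  obtain ⟨hIE, hUdef⟩ := hU
  have hlgap : ∀ w, IsGapComponent (SE p) (l w) (m w) := hIE.1
  have hlpos : ∀ w, 0 < l w := fun w => gap_pos haccE (hlgap w)
  have hmpos : ∀ w, 0 < m w := fun w => lt_trans (hlpos w) (hlgap w).2.1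
  have hl0 : Tendsto l atTop (𝓝 0) := hIE.2.2.1
  have hlm0 : Tendsto (fun w => l w / m w) atTop (𝓝 0) := memIE_div_tendsto hIE
  obtain ⟨N₀, hN₀⟩ := almostDecreasing_anti hIE.2.1
  by_cases hM0 : Mlim l m = 0
  · rw [hM0]; exact zero_le
  set Mr := (Mlim l m).toReal with hMr
  have hMrpos : 0 < Mr := ENNReal.toReal_pos hM0 hne
  set ρ : ℕ → ℝ := fun w => l w / m (w + 1) with hρdef
  have hρ0 : ∀ w, 0 ≤ ρ w := fun w => div_nonneg (hlpos w).le (hmpos _).le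
  have hMeq : Mlim l m = limsup (fun w => ENNReal.ofReal (ρ w)) atTop := rfl
  have hfreq : ∀ j : ℕ, ∃ᶠ w in atTop, |ρ w - Mr| < 1 / ((j:ℝ) + 1) := by
    intro j
    have hεpos : (0:ℝ) < 1 / ((j:ℝ) + 1) := by positivity
    set ε : ℝ := 1 / ((j:ℝ) + 1)
    have h1 : Mlim l m - ENNReal.ofReal ε < Mlim l m :=
      ENNReal.sub_lt_self hne hM0 (by simp [ENNReal.ofReal_eq_zero]; linarith)
    rw [hMeq] at h1
    have h2 : ∃ᶠ w in atTop, Mlim l m - ENNReal.ofReal ε < ENNReal.ofReal (ρ w) :=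
      frequently_lt_of_lt_limsup isCobounded_le_of_bot (hMeq ▸ h1)
    have h3 : ∀ᶠ w in atTop, ENNReal.ofReal (ρ w) < Mlim l m + ENNReal.ofReal ε := by
      refine eventually_lt_of_limsup_lt ?_ isBounded_le_of_top
      rw [← hMeq]
      exact ENNReal.lt_add_right hne (by simp [ENNReal.ofReal_eq_zero]; linarith)
    refine (h2.and_eventually h3).mono ?_
    rintro w ⟨hw1, hw2⟩
    rw [abs_lt]
    constructor
    · by_contra hcon
      push_neg at hcon
      have hle : ENNReal.ofReal (ρ w) ≤ Mlim l m - ENNReal.ofReal ε := by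
        calc ENNReal.ofReal (ρ w) ≤ ENNReal.ofReal (Mr - ε) :=
              ENNReal.ofReal_le_ofReal (by linarith)
          _ = ENNReal.ofReal Mr - ENNReal.ofReal ε := ENNReal.ofReal_sub Mr hεpos.le
          _ = Mlim l m - ENNReal.ofReal ε := by rw [ENNReal.ofReal_toReal hne]
      exact absurd (lt_of_lt_of_le hw1 hle) (lt_irrefl _)
    · by_contra hcon
      push_neg at hcon
      have hge : Mlim l m + ENNReal.ofReal ε ≤ ENNReal.ofReal (ρ w) := by
        calc Mlim l m + ENNReal.ofReal ε
            = ENNReal.ofReal Mr + ENNReal.ofReal ε := by rw [ENNReal.ofReal_toReal hne]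
          _ = ENNReal.ofReal (Mr + ε) := (ENNReal.ofReal_add ENNReal.toReal_nonneg hεpos.le).symm
          _ ≤ ENNReal.ofReal (ρ w) := ENNReal.ofReal_le_ofReal (by linarith)
      exact absurd (lt_of_le_of_lt hge hw2) (lt_irrefl _)
  obtain ⟨φ, hφmono, hφ⟩ := extract_freq hfreq
  have hρφ : Tendsto (fun j => ρ (φ j)) atTop (𝓝 Mr) := tendsto_of_abs_lt hφ
  have hlmφ : Tendsto (fun j => l (φ j) / m (φ j)) atTop (𝓝 0) :=
    hlm0.comp hφmono.tendsto_atTop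
  have hlφ0 : Tendsto (fun j => l (φ j)) atTop (𝓝 0) := hl0.comp hφmono.tendsto_atTop
  have hdist : ∀ᶠ j in atTop, m (φ j + 1) ≤ l (φ j) := by
    have e1 := hρφ.eventually (eventually_gt_nhds (half_lt_self hMrpos))
    have e2 := hlmφ.eventually (eventually_lt_nhds (half_pos hMrpos))
    have e3 : ∀ᶠ j in atTop, N₀ ≤ φ j :=
      hφmono.tendsto_atTop.eventually (eventually_ge_atTop N₀)
    filter_upwards [e1, e2, e3] with j h1 h2 h3
    have hlt : l (φ j + 1) < l (φ j) := by
      rcases lt_or_eq_of_le (hN₀ h3 (Nat.le_succ (φ j))) with hlt | heq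
      · exact hlt
      · exfalso
        have hg2 := hlgap (φ j + 1)
        rw [heq] at hg2
        have := gap_unique_right (hlgap (φ j)) hg2
        have hρeq : ρ (φ j) = l (φ j) / m (φ j) := by
          rw [hρdef]; simp only []; rw [← this]
        rw [hρeq] at h1
        linarith
    exact gap_disjoint (hlgap (φ j)) (hlgap (φ j + 1)) hlt
  have hch1 : ∀ j : ℕ, ∃ e ∈ SE p, m (φ j + 1) ≤ e ∧
      e < m (φ j + 1) + m (φ j + 1) / ((j:ℝ) + 1) := by
    intro j
    obtain ⟨e, he, h1, h2⟩ := gap_right_mem (hlgap (φ j + 1))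
      (div_pos (hmpos (φ j + 1)) (by positivity : (0:ℝ) < (j:ℝ) + 1))
    exact ⟨e, he, h1, h2⟩
  choose T hTE hT1 hT2 using hch1
  have hch2 : ∀ j : ℕ, ∃ e ∈ SE p, l (φ j) - l (φ j) / ((j:ℝ) + 1) < e ∧ e ≤ l (φ j) := by
    intro j
    obtain ⟨e, he, h1, h2⟩ := gap_left_mem (hlgap (φ j)) (hlpos _)
      (div_pos (hlpos (φ j)) (by positivity : (0:ℝ) < (j:ℝ) + 1))
    exact ⟨e, he, h1, h2⟩
  choose S hSE hS1 hS2 using hch2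
  have hTpos : ∀ j, 0 < T j := fun j => lt_of_lt_of_le (hmpos _) (hT1 j)
  have hT0 : Tendsto T atTop (𝓝 0) := by
    have hup : Tendsto (fun j => 2 * l (φ j)) atTop (𝓝 0) := by
      have := hlφ0.const_mul 2; rwa [mul_zero] at this
    refine tendsto_of_tendsto_of_tendsto_of_le_of_le' tendsto_const_nhds hup ?_ ?_
    · exact Eventually.of_forall fun j => (hTpos j).le
    · filter_upwards [hdist] with j h1
      have h2 := hT2 j
      have h3 : m (φ j + 1) / ((j:ℝ) + 1) ≤ m (φ j + 1) := by
        rw [div_le_iff₀ (by positivity : (0:ℝ) < (j:ℝ) + 1)]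
        nlinarith [(hmpos (φ j + 1)).le, Nat.cast_nonneg (α := ℝ) j]
      linarith
  have hratio : Tendsto (fun j => S j / T j) atTop (𝓝 Mr) := by
    have hδ : Tendsto (fun j : ℕ => 1 / ((j:ℝ) + 1)) atTop (𝓝 0) :=
      tendsto_one_div_add_atTop_nhds_zero_nat
    have hlow : Tendsto (fun j : ℕ => ((1 - 1 / ((j:ℝ) + 1)) / (1 + 1 / ((j:ℝ) + 1))) * ρ (φ j))
        atTop (𝓝 (((1 - 0) / (1 + 0)) * Mr)) :=
      Tendsto.mul (Tendsto.div (tendsto_const_nhds.sub hδ) (tendsto_const_nhds.add hδ)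
        (by norm_num)) hρφ
    rw [sub_zero, add_zero, div_one, one_mul] at hlow
    refine tendsto_of_tendsto_of_tendsto_of_le_of_le' hlow hρφ ?_ ?_
    · refine Eventually.of_forall fun j => ?_
      have hδ1 : 1 / ((j:ℝ) + 1) ≤ 1 := by
        rw [div_le_one (by positivity)]
        linarith [Nat.cast_nonneg (α := ℝ) j]
      have hδpos : (0:ℝ) < 1 / ((j:ℝ) + 1) := by positivity
      have e1 : (1 - 1/((j:ℝ)+1)) * l (φ j) ≤ S j := by
        have heq : (1 - 1/((j:ℝ)+1)) * l (φ j) = l (φ j) - l (φ j) / ((j:ℝ)+1) := by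
          ring
        rw [heq]
        linarith [hS1 j]
      have e2 : T j ≤ (1 + 1/((j:ℝ)+1)) * m (φ j + 1) := by
        have heq : (1 + 1/((j:ℝ)+1)) * m (φ j + 1) =
            m (φ j + 1) + m (φ j + 1) / ((j:ℝ)+1) := by ring
        rw [heq]
        linarith [hT2 j]
      have hS0 : (0:ℝ) ≤ S j := by
        have h5 : (0:ℝ) ≤ (1 - 1/((j:ℝ)+1)) * l (φ j) := by
          apply mul_nonneg _ (hlpos (φ j)).le
          have : 1 / ((j:ℝ)+1) ≤ 1 := by
            rw [div_le_one (by positivity)]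
            linarith [Nat.cast_nonneg (α := ℝ) j]
          linarith
        linarith
      have hkey : ((1 - 1/((j:ℝ)+1)) * l (φ j)) / ((1 + 1/((j:ℝ)+1)) * m (φ j + 1)) ≤
          S j / T j := div_le_div₀ hS0 e1 (hTpos j) e2
      calc ((1 - 1/((j:ℝ)+1)) / (1 + 1/((j:ℝ)+1))) * ρ (φ j)
          = ((1 - 1/((j:ℝ)+1)) * l (φ j)) / ((1 + 1/((j:ℝ)+1)) * m (φ j + 1)) := by
            rw [hρdef]; simp only []; rw [div_mul_div_comm]
        _ ≤ S j / T j := hkey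
    · refine Eventually.of_forall fun j => ?_
      exact div_le_div₀ (hlpos (φ j)).le (hS2 j) (hmpos _) (hT1 j)
  obtain ⟨ψ, hψmono, hψdec⟩ := exists_strictmono_subseq hT0 hTpos
  have hRD : RD (SE p) Mr :=
    ⟨T ∘ ψ, S ∘ ψ, fun j => hTE _, fun j => hTpos _, almostDecreasing_of_strict hψdec,
      hT0.comp hψmono.tendsto_atTop, fun j => hSE _, hratio.comp hψmono.tendsto_atTop⟩
  have hfinal := RD_le_RstarX hRD
  rwa [hMr, ENNReal.ofReal_toReal hne] at hfinal

end LowerFin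

section LowerTop

lemma tendsto_interleave {u v c : ℕ → ℝ}
    (hu : Tendsto u atTop (𝓝 0)) (hv : Tendsto v atTop (𝓝 0))
    (hc : ∀ q, c q = if q % 2 = 0 then u (q / 2) else v (q / 2)) :
    Tendsto c atTop (𝓝 0) := by
  rw [Metric.tendsto_atTop]
  intro ε hε
  rw [Metric.tendsto_atTop] at hu hv
  obtain ⟨N₁, hN₁⟩ := hu ε hε
  obtain ⟨N₂, hN₂⟩ := hv ε hε
  refine ⟨2 * max N₁ N₂ + 2, fun q hq => ?_⟩
  have hq2 : max N₁ N₂ ≤ q / 2 := by omega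
  rw [hc q]
  by_cases hpar : q % 2 = 0
  · rw [if_pos hpar]
    exact hN₁ _ (le_trans (le_max_left _ _) hq2)
  · rw [if_neg hpar]
    exact hN₂ _ (le_trans (le_max_right _ _) hq2)

variable {X : Type*} [MetricSpace X] {p : X}

lemma mlim_ne_top (hfin : RstarX p < ⊤) (hacc : p ∈ closure ({p}ᶜ : Set X))
    {l m : ℕ → ℝ} (hU : IsUniversal (SE p) l m) : Mlim l m ≠ ⊤ := by
  intro htop
  have haccE := hacc_of_closure hacc
  obtain ⟨hIE, hUdef⟩ := hU
  have hlgap : ∀ w, IsGapComponent (SE p) (l w) (m w) := hIE.1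
  have hlpos : ∀ w, 0 < l w := fun w => gap_pos haccE (hlgap w)
  have hmpos : ∀ w, 0 < m w := fun w => lt_trans (hlpos w) (hlgap w).2.1
  have hl0 : Tendsto l atTop (𝓝 0) := hIE.2.2.1
  have hlm0 : Tendsto (fun w => l w / m w) atTop (𝓝 0) := memIE_div_tendsto hIE
  obtain ⟨N₀, hN₀⟩ := almostDecreasing_anti hIE.2.1
  set ρ : ℕ → ℝ := fun w => l w / m (w + 1) with hρdef
  have hMeq : Mlim l m = limsup (fun w => ENNReal.ofReal (ρ w)) atTop := rfl
  -- frequently large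
  have hfreq : ∀ j : ℕ, ∃ᶠ w in atTop, (j:ℝ) < ρ w := by
    intro j
    have h1 : (ENNReal.ofReal j) < limsup (fun w => ENNReal.ofReal (ρ w)) atTop := by
      rw [← hMeq, htop]
      exact ENNReal.ofReal_lt_top
    have h2 := frequently_lt_of_lt_limsup isCobounded_le_of_bot h1
    refine h2.mono fun w hw => ?_
    by_contra hcon
    push_neg at hcon
    exact absurd (lt_of_lt_of_le hw (ENNReal.ofReal_le_ofReal hcon)) (lt_irrefl _)
  obtain ⟨φ, hφmono, hφ⟩ := extract_freq hfreq
  have hρtop : Tendsto (fun j => ρ (φ j)) atTop atTop :=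
    tendsto_atTop_mono (fun j => (hφ j).le) tendsto_natCast_atTop_atTop
  -- eventual gap separation
  have hdist : ∀ᶠ j in atTop, m (φ j + 1) ≤ l (φ j) := by
    have e1 := hρtop.eventually (eventually_gt_atTop (1:ℝ))
    have e3 : ∀ᶠ j in atTop, N₀ ≤ φ j :=
      hφmono.tendsto_atTop.eventually (eventually_ge_atTop N₀)
    filter_upwards [e1, e3] with j h1 h3
    have hlt : l (φ j + 1) < l (φ j) := by
      rcases lt_or_eq_of_le (hN₀ h3 (Nat.le_succ (φ j))) with hlt | heq
      · exact hlt
      · exfalso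
        have hg2 := hlgap (φ j + 1)
        rw [heq] at hg2
        have hmm := gap_unique_right (hlgap (φ j)) hg2
        have hρeq : ρ (φ j) = l (φ j) / m (φ j) := by
          rw [hρdef]; simp only []; rw [← hmm]
        rw [hρeq] at h1
        have : l (φ j) / m (φ j) < 1 := by
          rw [div_lt_one (hmpos (φ j))]
          exact (hlgap (φ j)).2.1
        linarith
    exact gap_disjoint (hlgap (φ j)) (hlgap (φ j + 1)) hlt
  -- bottom-of-cluster points
  have hch1 : ∀ j : ℕ, ∃ e ∈ SE p, m (φ j + 1) ≤ e ∧
      e < m (φ j + 1) + m (φ j + 1) / ((j:ℝ) + 1) := by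
    intro j
    obtain ⟨e, he, h1, h2⟩ := gap_right_mem (hlgap (φ j + 1))
      (div_pos (hmpos (φ j + 1)) (by positivity : (0:ℝ) < (j:ℝ) + 1))
    exact ⟨e, he, h1, h2⟩
  choose T hTE hT1 hT2 using hch1
  have hTpos : ∀ j, 0 < T j := fun j => lt_of_lt_of_le (hmpos _) (hT1 j)
  have hT2' : ∀ j, T j ≤ 2 * m (φ j + 1) := by
    intro j
    have h3 : m (φ j + 1) / ((j:ℝ) + 1) ≤ m (φ j + 1) := by
      rw [div_le_iff₀ (by positivity : (0:ℝ) < (j:ℝ) + 1)]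
      nlinarith [(hmpos (φ j + 1)).le, Nat.cast_nonneg (α := ℝ) j]
    linarith [hT2 j]
  have hT0 : Tendsto T atTop (𝓝 0) := by
    have hup : Tendsto (fun j => 2 * l (φ j)) atTop (𝓝 0) := by
      have := (hl0.comp hφmono.tendsto_atTop).const_mul 2
      rwa [mul_zero] at this
    refine tendsto_of_tendsto_of_tendsto_of_le_of_le' tendsto_const_nhds hup ?_ ?_
    · exact Eventually.of_forall fun j => (hTpos j).le
    · filter_upwards [hdist] with j h1
      have := hT2' j
      linarith
  obtain ⟨ψ, hψmono, hψdec⟩ := exists_strictmono_subseq hT0 hTpos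
  set W : ℕ → ℕ := fun i => φ (ψ i) with hWdef
  have hWmono : StrictMono W := hφmono.comp hψmono
  set T' : ℕ → ℝ := fun i => T (ψ i) with hT'def
  obtain ⟨A, B, N₂, hgapA, hboundsA, hbtA, hIEA⟩ := gap_package hfin T'
    (fun i => hTE _) (fun i => hTpos _) (almostDecreasing_of_strict hψdec)
    (hT0.comp hψmono.tendsto_atTop)
  set K := (RstarX p).toReal + 1 with hKdef
  have hK0 : (0:ℝ) ≤ (RstarX p).toReal := ENNReal.toReal_nonneg
  have hKpos : (0:ℝ) < K := by rw [hKdef]; linarith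
  set A' : ℕ → ℝ := fun i => A (max i N₂) with hA'def
  set B' : ℕ → ℝ := fun i => B (max i N₂) with hB'def
  have hA'gap : ∀ i, IsGapComponent (SE p) (A' i) (B' i) := hIEA.1
  have hA'pos : ∀ i, 0 < A' i := fun i => gap_pos haccE (hA'gap i)
  have hB'pos : ∀ i, 0 < B' i := fun i => lt_trans (hA'pos i) (hA'gap i).2.1
  have hA'0 : Tendsto A' atTop (𝓝 0) := hIEA.2.2.1
  have hρW : Tendsto (fun i => ρ (W i)) atTop atTop := hρtop.comp hψmono.tendsto_atTop
  have hdistW : ∀ᶠ i in atTop, m (W i + 1) ≤ l (W i) :=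
    hψmono.tendsto_atTop.eventually hdist
  have hWN₀ : ∀ᶠ i in atTop, N₀ ≤ W i :=
    hWmono.tendsto_atTop.eventually (eventually_ge_atTop N₀)
  -- key eventual comparisons
  have hkey : ∀ᶠ i in atTop, A' i < l (W i) ∧ l (W i + 1) < A' i ∧ m (W i + 1) ≤ A' i := by
    filter_upwards [eventually_ge_atTop N₂, hρW.eventually (eventually_gt_atTop (2*K + 2)),
      hdistW] with i h1 h2 h3
    have hA'eq : A' i = A i := by rw [hA'def]; simp only []; rw [max_eq_left h1]
    have hb := hboundsA i h1
    have hTm : m (W i + 1) ≤ T' i := hT1 (ψ i)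
    have hTm2 : T' i ≤ 2 * m (W i + 1) := hT2' (ψ i)
    have hup : A' i ≤ 2 * K * m (W i + 1) := by
      rw [hA'eq]
      calc A i ≤ K * T' i := hb.2
        _ ≤ K * (2 * m (W i + 1)) := by nlinarith
        _ = 2 * K * m (W i + 1) := by ring
    have hlgt : (2*K + 2) * m (W i + 1) < l (W i) := by
      have : (2*K + 2) < l (W i) / m (W i + 1) := h2
      rwa [lt_div_iff₀ (hmpos (W i + 1))] at this
    refine ⟨?_, ?_, ?_⟩
    · nlinarith [hmpos (W i + 1)]
    · calc l (W i + 1) < m (W i + 1) := (hlgap (W i + 1)).2.1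
        _ ≤ T' i := hTm
        _ ≤ A i := hb.1
        _ = A' i := hA'eq.symm
    · calc m (W i + 1) ≤ T' i := hTm
        _ ≤ A i := hb.1
        _ = A' i := hA'eq.symm
  -- the interleaved competitor
  set c : ℕ → ℝ := fun q => if q % 2 = 0 then l (W (q / 2)) else A' (q / 2) with hcdef
  set d : ℕ → ℝ := fun q => if q % 2 = 0 then m (W (q / 2)) else B' (q / 2) with hddef
  have hcgap : ∀ q, IsGapComponent (SE p) (c q) (d q) := by
    intro q
    rw [hcdef, hddef]
    simp only []
    by_cases hpar : q % 2 = 0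
    · rw [if_pos hpar, if_pos hpar]; exact hlgap _
    · rw [if_neg hpar, if_neg hpar]; exact hA'gap _
  have hcad : AlmostDecreasing c := by
    obtain ⟨I₁, hI₁⟩ := eventually_atTop.1 hkey
    obtain ⟨I₂, hI₂⟩ := eventually_atTop.1 hWN₀
    refine eventually_atTop.2 ⟨2 * max I₁ I₂ + 2, fun q hq => ?_⟩
    have hi : max I₁ I₂ ≤ q / 2 := by omega
    set i := q / 2 with hidef
    have hk1 := hI₁ i (le_trans (le_max_left _ _) hi)
    have hk2 := hI₂ i (le_trans (le_max_right _ _) hi)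
    by_cases hpar : q % 2 = 0
    · have e1 : (q + 1) % 2 ≠ 0 := by omega
      have e2 : (q + 1) / 2 = i := by omega
      rw [hcdef]
      simp only []
      rw [if_neg e1, if_pos hpar, e2, ← hidef]
      exact (hk1.1).le
    · have e1 : (q + 1) % 2 = 0 := by omega
      have e2 : (q + 1) / 2 = i + 1 := by omega
      rw [hcdef]
      simp only []
      rw [if_pos e1, if_neg hpar, e2, ← hidef]
      have h5 : W i + 1 ≤ W (i + 1) := hWmono (Nat.lt_succ_self i)
      have h6 : l (W (i + 1)) ≤ l (W i + 1) := hN₀ (by omega) h5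
      linarith [hk1.2.1]
  have hc0 : Tendsto c atTop (𝓝 0) := by
    refine tendsto_interleave (u := fun i => l (W i)) (v := A')
      (hl0.comp hWmono.tendsto_atTop) hA'0 fun q => rfl
  have hcd0 : Tendsto (fun q => c q / d q) atTop (𝓝 0) := by
    refine tendsto_interleave (u := fun i => l (W i) / m (W i))
      (v := fun i => A' i / B' i)
      (hlm0.comp hWmono.tendsto_atTop) (memIE_div_tendsto hIEA) fun q => ?_
    by_cases hpar : q % 2 = 0
    · simp [hcdef, hddef, hpar]
    · simp [hcdef, hddef, hpar]
  have hdpos : ∀ q, 0 < d q := fun q =>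
    lt_of_le_of_lt (hcgap q).1 (hcgap q).2.1
  have hcIE : MemIE (SE p) c d :=
    ⟨hcgap, hcad, hc0, ratio_tendsto_one hdpos hcd0⟩
  obtain ⟨N₃, h, hh⟩ := hUdef c d hcIE
  -- pick a large index
  have hne3 : (Finset.range (N₀ + 1)).Nonempty := ⟨0, by simp⟩
  have hinfpos : 0 < (Finset.range (N₀ + 1)).inf' hne3 l := by
    rw [Finset.lt_inf'_iff]
    exact fun w _ => hlpos w
  have hsmallA : ∀ᶠ i in atTop, A' i < (Finset.range (N₀ + 1)).inf' hne3 l :=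
    hA'0.eventually (eventually_lt_nhds hinfpos)
  obtain ⟨I₁, hI₁⟩ := eventually_atTop.1 hkey
  obtain ⟨I₂, hI₂⟩ := eventually_atTop.1 hWN₀
  obtain ⟨I₃, hI₃⟩ := eventually_atTop.1 hsmallA
  set i₀ := max (max I₁ I₂) (max I₃ N₃) with hi₀
  have hio1 : I₁ ≤ i₀ := le_trans (le_max_left _ _) (le_max_left _ _)
  have hio2 : I₂ ≤ i₀ := le_trans (le_max_right _ _) (le_max_left _ _)
  have hio3 : I₃ ≤ i₀ := le_trans (le_max_left _ _) (le_max_right _ _)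
  have hio4 : N₃ ≤ i₀ := le_trans (le_max_right _ _) (le_max_right _ _)
  have hq3 : N₃ ≤ 2 * i₀ + 1 := by omega
  have hval : c (2 * i₀ + 1) = l (h (2 * i₀ + 1)) := hh _ hq3
  have hcval : c (2 * i₀ + 1) = A' i₀ := by
    rw [hcdef]
    simp only []
    rw [if_neg (by omega : ¬ (2 * i₀ + 1) % 2 = 0)]
    congr 1
    omega
  set w₂ := h (2 * i₀ + 1) with hw₂
  have hlw₂ : l w₂ = A' i₀ := by rw [← hval, hcval]
  have hw₂N₀ : N₀ ≤ w₂ := by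
    by_contra hcon
    push_neg at hcon
    have hmem : w₂ ∈ Finset.range (N₀ + 1) := by simp; omega
    have := Finset.inf'_le l hmem
    have h7 := hI₃ i₀ hio3
    rw [hlw₂] at this
    linarith
  have hk1 := hI₁ i₀ hio1
  have hk2 := hI₂ i₀ hio2
  have hup : W i₀ < w₂ := by
    by_contra hcon
    push_neg at hcon
    have := hN₀ hw₂N₀ hcon
    rw [hlw₂] at this
    linarith [hk1.1]
  have hdn : w₂ < W i₀ + 1 := by
    by_contra hcon
    push_neg at hcon
    have := hN₀ (by omega : N₀ ≤ W i₀ + 1) hcon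
    rw [hlw₂] at this
    linarith [hk1.2.1]
  omega

end LowerTop


/-- Theorem 3.10. -/
theorem stmt10 {X : Type*} [MetricSpace X] (p : X) :
    (RstarX p < ⊤ ↔ CSP {t : ℝ | ∃ x : X, dist x p = t}) ∧
      (RstarX p < ⊤ → p ∈ closure ({p}ᶜ : Set X) →
        ∀ l m : ℕ → ℝ, IsUniversal {t : ℝ | ∃ x : X, dist x p = t} l m →
          RstarX p = Mlim l m) := by
  constructor
  · constructor
    · intro hfin
      exact csp_of_fin hfin
    · intro hCSP
      by_contra hcon
      have htop : RstarX p = ⊤ := by rwa [lt_top_iff_ne_top, not_not] at hcon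
      exact not_csp_of_top htop hCSP
  · intro hfin hacc l m hU
    exact le_antisymm (upper_bound hfin hacc hU)
      (lower_bound_fin hacc hU (mlim_ne_top hfin hacc hU))
end

section
/- Let (X,d,p) be a pointed metric space admitting at least one normal scaling sequence (i.e., Ω_p^X(n) ≠ ∅). Then the family Ω_p^X(n) is uniformly discrete if and only if it is uniformly bounded; moreover, if Ω_p^X(n) is uniformly bounded then R_*(Ω_p^X(n)) = 1 / R*(Ω_p^X(n)). -/
open Filter Topology Set
open scoped ENNReal

/-- Extract a strictly decreasing positive subsequence of a null sequence that is
eventually positive. -/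
lemma exists_decr_subseq (u : ℕ → ℝ) (h0 : Tendsto u atTop (𝓝 0))
    (hpos : ∀ᶠ n in atTop, 0 < u n) :
    ∃ φ : ℕ → ℕ, StrictMono φ ∧ (∀ k, 0 < u (φ k)) ∧ ∀ k, u (φ (k + 1)) < u (φ k) := by
  obtain ⟨N, hN⟩ := eventually_atTop.1 hpos
  have step : ∀ m : {m : ℕ // 0 < u m}, ∃ m' : {m : ℕ // 0 < u m},
      (m : ℕ) < m' ∧ u m' < u m := by
    rintro ⟨m, hm⟩
    have h1 : ∀ᶠ n in atTop, u n < u m := h0.eventually (gt_mem_nhds hm)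
    have h3 : ∀ᶠ n in atTop, m < n := eventually_gt_atTop m
    obtain ⟨m', h⟩ := (h1.and (hpos.and h3)).exists
    exact ⟨⟨m', h.2.1⟩, h.2.2, h.1⟩
  choose f hf1 hf2 using step
  set g : ℕ → {m : ℕ // 0 < u m} := fun k => f^[k] ⟨N, hN N le_rfl⟩ with hg
  have hsucc : ∀ k, g (k + 1) = f (g k) := fun k => Function.iterate_succ_apply' f k _
  refine ⟨fun k => (g k : ℕ), strictMono_nat_of_lt_succ fun k => ?_, fun k => (g k).2,
    fun k => ?_⟩
  · show (g k : ℕ) < (g (k + 1) : ℕ); rw [hsucc]; exact hf1 (g k)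
  · show u (g (k + 1) : ℕ) < u (g k : ℕ); rw [hsucc]; exact hf2 (g k)

/-- Inversion: if `L > 0` is an achievable limit w.r.t. some normal scaling sequence,
then so is `L⁻¹`. -/
lemma inv_achievable {X : Type*} [MetricSpace X] (p : X) {r : ℕ → ℝ} {x : ℕ → X} {L : ℝ}
    (hr : IsNormalX p r) (hx : Tendsto (fun n => dist (x n) p / r n) atTop (𝓝 L))
    (hL : 0 < L) :
    ∃ (ρ : ℕ → ℝ) (z : ℕ → X), IsNormalX p ρ ∧
      Tendsto (fun n => dist (z n) p / ρ n) atTop (𝓝 L⁻¹) := by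
  obtain ⟨⟨hrpos, hr0⟩, y, hyad, hy1⟩ := hr
  set u : ℕ → ℝ := fun n => dist (x n) p with hu
  have hueq : ∀ n, u n / r n * r n = u n := fun n => div_mul_cancel₀ _ (hrpos n).ne'
  have hu0 : Tendsto u atTop (𝓝 0) := by
    have := hx.mul hr0
    rw [mul_zero] at this
    exact this.congr fun n => hueq n
  have hupos : ∀ᶠ n in atTop, 0 < u n := by
    have h1 : ∀ᶠ n in atTop, L / 2 < u n / r n :=
      hx.eventually (lt_mem_nhds (show L / 2 < L by linarith))
    filter_upwards [h1] with n hn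
    have : 0 < u n / r n := lt_trans (by linarith) hn
    have := mul_pos this (hrpos n)
    rwa [hueq n] at this
  obtain ⟨φ, hφmono, hφpos, hφdec⟩ := exists_decr_subseq u hu0 hupos
  refine ⟨fun k => u (φ k), fun k => y (φ k), ⟨⟨fun k => hφpos k,
    hu0.comp hφmono.tendsto_atTop⟩, fun k => x (φ k), ?_, ?_⟩, ?_⟩
  · exact Eventually.of_forall fun k => (hφdec k).le
  · have : ∀ k, dist (x (φ k)) p / u (φ k) = 1 := fun k => div_self (hφpos k).ne'
    exact tendsto_const_nhds.congr fun k => (this k).symm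
  · have hmain : Tendsto (fun n => dist (y n) p / u n) atTop (𝓝 L⁻¹) := by
      have h := hy1.mul (hx.inv₀ hL.ne')
      rw [one_mul] at h
      refine h.congr' ?_
      filter_upwards [hupos] with n hn
      have h1 : dist (x n) p ≠ 0 := hn.ne'
      have h2 : r n ≠ 0 := (hrpos n).ne'
      show dist (y n) p / r n * (dist (x n) p / r n)⁻¹ = dist (y n) p / dist (x n) p
      field_simp
    exact hmain.comp hφmono.tendsto_atTop

/-- Theorem 4.4.1. -/
theorem stmt12 {X : Type*} [MetricSpace X] (p : X)
    (hne : ∃ r : ℕ → ℝ, IsNormalX p r) :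
    (0 < RlowX p ↔ RstarX p < ⊤) ∧
      (RstarX p < ⊤ → RlowX p = 1 / RstarX p) := by

  classical
  set A := {c : ℝ≥0∞ | ∃ (r : ℕ → ℝ) (x : ℕ → X) (L : ℝ), IsNormalX p r ∧
    Tendsto (fun n => dist (x n) p / r n) atTop (𝓝 L) ∧ c = ENNReal.ofReal L} with hA
  set B := {c : ℝ≥0∞ | ∃ (r : ℕ → ℝ) (x : ℕ → X) (L : ℝ), IsNormalX p r ∧
    Tendsto (fun n => dist (x n) p / r n) atTop (𝓝 L) ∧ 0 < L ∧ c = ENNReal.ofReal L}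
    with hB
  have hRstar : RstarX p = sSup A := rfl
  have hRlow : RlowX p = sInf B := rfl
  -- 1 ∈ B
  have h1B : (1 : ℝ≥0∞) ∈ B := by
    obtain ⟨r, hr⟩ := hne
    obtain ⟨hs, y, hyad, hy1⟩ := hr
    exact ⟨r, y, 1, ⟨hs, y, hyad, hy1⟩, hy1, one_pos, by simp⟩
  -- B is closed under inversion
  have hinv : ∀ c ∈ B, c⁻¹ ∈ B := by
    rintro c ⟨r, x, L, hr, hx, hL, rfl⟩
    obtain ⟨ρ, z, hρ, hz⟩ := inv_achievable p hr hx hL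
    exact ⟨ρ, z, L⁻¹, hρ, hz, inv_pos.2 hL,
      (ENNReal.ofReal_inv_of_pos hL).symm⟩
  -- sSup A = sSup B
  have hBA : B ⊆ A := by
    rintro c ⟨r, x, L, hr, hx, hL, rfl⟩; exact ⟨r, x, L, hr, hx, rfl⟩
  have hsupAB : sSup A = sSup B := by
    refine le_antisymm (sSup_le fun c hc => ?_) (sSup_le_sSup hBA)
    obtain ⟨r, x, L, hr, hx, rfl⟩ := hc
    rcases le_or_gt L 0 with hL | hL
    · simp [ENNReal.ofReal_eq_zero.2 hL]
    · exact le_sSup (⟨r, x, L, hr, hx, hL, rfl⟩ : ENNReal.ofReal L ∈ B)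
  -- sInf B = (sSup B)⁻¹
  have hkey : sInf B = (sSup B)⁻¹ := by
    refine le_antisymm ?_ (le_sInf fun b hb => ?_)
    · have h1 : sSup B ≤ (sInf B)⁻¹ := by
        refine sSup_le fun b hb => ?_
        have := sInf_le (hinv b hb)
        calc b = b⁻¹⁻¹ := (inv_inv b).symm
          _ ≤ (sInf B)⁻¹ := ENNReal.inv_le_inv.2 this
      calc sInf B = (sInf B)⁻¹⁻¹ := (inv_inv _).symm
        _ ≤ (sSup B)⁻¹ := ENNReal.inv_le_inv.2 h1
    · have := le_sSup (hinv b hb)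
      calc (sSup B)⁻¹ ≤ b⁻¹⁻¹ := ENNReal.inv_le_inv.2 this
        _ = b := inv_inv b
  have hmain : RlowX p = (RstarX p)⁻¹ := by
    rw [hRlow, hRstar, hsupAB, hkey]
  constructor
  · rw [hmain, ENNReal.inv_pos, lt_top_iff_ne_top]
  · intro _
    rw [hmain, one_div]
end
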